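/- arXiv:1712.06904 — 7 statements merged into one kernel-verified Lean document; each statement's English description precedes it below -/
import Mathlib

section
/- For every K > 0, every D ∈ (0,∞) and every θ ∈ (0,1), one has I_{(K,∞,D)}(θ) > I_{(K,∞,∞)}(θ). -/
open Set MeasureTheory intervalIntegral

namespace Stmt0Aux

open Filter Real

noncomputable def E (K s : ℝ) : ℝ := Real.exp (-K * s ^ 2 / 2)

noncomputable def F (K x : ℝ) : ℝ := ∫ s in Set.Iic x, E K s

variable {K : ℝ} (hK : 0 < K)

lemma E_pos (s : ℝ) : 0 < E K s := Real.exp_pos _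

lemma E_cont : Continuous (E K) := by
  unfold E; fun_prop

lemma E_eq : E K = fun s => Real.exp (-(K/2) * s ^ 2) := by
  funext s; unfold E; congr 1; ring

include hK in
lemma E_int : Integrable (E K) := by
  rw [E_eq]; exact integrable_exp_neg_mul_sq (by linarith)

include hK in
lemma sE_int : Integrable (fun s => s * E K s) := by
  rw [E_eq]; exact integrable_mul_exp_neg_mul_sq (by linarith)

lemma E_even (s : ℝ) : E K (-s) = E K s := by unfold E; rw [neg_pow]; ring_nf

lemma E_deriv (x : ℝ) : HasDerivAt (E K) (E K x * (-K * x)) x := by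
  have h1 : HasDerivAt (fun s : ℝ => -K * s ^ 2 / 2) (-K * x) x := by
    have := ((hasDerivAt_pow 2 x).const_mul (-K)).div_const 2
    refine this.congr_deriv ?_
    push_cast; ring
  exact h1.exp

include hK in
lemma F_sub (x y : ℝ) : F K y - F K x = ∫ s in x..y, E K s :=
  integral_Iic_sub_Iic (E_int hK).integrableOn (E_int hK).integrableOn

include hK in
lemma F_deriv (x : ℝ) : HasDerivAt (F K) (E K x) x := by
  have key : ∀ y, F K y = F K 0 + ∫ s in (0:ℝ)..y, E K s := by
    intro y; have := F_sub hK 0 y; linarith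
  have h1 : HasDerivAt (fun y => F K 0 + ∫ s in (0:ℝ)..y, E K s) (E K x) x := by
    exact ((integral_hasDerivAt_right ((E_cont).intervalIntegrable 0 x)
      ((E_cont).stronglyMeasurableAtFilter _ _) (E_cont).continuousAt).const_add _)
  exact h1.congr_of_eventuallyEq (Filter.Eventually.of_forall fun y => (key y))

include hK in
lemma F_cont : Continuous (F K) :=
  continuous_iff_continuousAt.mpr fun x => (F_deriv hK x).continuousAt

lemma F_nonneg (x : ℝ) : 0 ≤ F K x :=
  setIntegral_nonneg measurableSet_Iic fun s _ => (E_pos s).le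

include hK in
lemma F_pos (x : ℝ) : 0 < F K x := by
  have h1 : F K x - F K (x - 1) = ∫ s in (x-1)..x, E K s := F_sub hK _ _
  have h2 : 0 < ∫ s in (x-1)..x, E K s :=
    intervalIntegral.intervalIntegral_pos_of_pos ((E_cont).intervalIntegrable _ _)
      (fun s => E_pos s) (by linarith)
  have := F_nonneg (K := K) (x - 1)
  linarith

include hK in
lemma F_mono {x y : ℝ} (h : x ≤ y) : F K x ≤ F K y := by
  have h1 := F_sub hK x y
  have h2 : 0 ≤ ∫ s in x..y, E K s :=
    intervalIntegral.integral_nonneg h fun s _ => (E_pos s).le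
  linarith

include hK in
lemma F_le_T (x : ℝ) : F K x ≤ ∫ s, E K s :=
  setIntegral_le_integral (E_int hK) (Filter.Eventually.of_forall fun s => (E_pos s).le)

include hK in
lemma T_pos : 0 < ∫ s, E K s := lt_of_lt_of_le (F_pos hK 0) (F_le_T hK 0)

include hK in
lemma F_neg_eq (x : ℝ) : F K (-x) = (∫ s, E K s) - F K x := by
  have h1 : F K (-x) = ∫ s in Set.Ioi x, E K s := by
    unfold F
    rw [show (∫ s in Set.Iic (-x), E K s) = ∫ s in Set.Iic (-x), E K (-s) from
      (setIntegral_congr_fun measurableSet_Iic fun s _ => (E_even s).symm)]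
    rw [integral_comp_neg_Iic]
    norm_num
  have h2 : F K x + ∫ s in Set.Ioi x, E K s = ∫ s, E K s :=
    intervalIntegral.integral_Iic_add_Ioi (E_int hK).integrableOn (E_int hK).integrableOn
  linarith

include hK in
lemma E_tendsto_bot : Tendsto (E K) atBot (nhds 0) := by
  have h2 : Tendsto (fun s : ℝ => s ^ 2) atBot atTop := by
    have h := (tendsto_pow_atTop (n := 2) two_ne_zero).comp
      (tendsto_neg_atBot_atTop (G := ℝ))
    refine h.congr fun s => ?_
    simp [Function.comp]
  have h3 : Tendsto (fun s : ℝ => -K * s ^ 2 / 2) atBot atBot := by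
    have h4 : Tendsto (fun s : ℝ => (K/2) * s ^ 2) atBot atTop :=
      h2.const_mul_atTop (by linarith)
    have := tendsto_neg_atTop_atBot.comp h4
    apply this.congr
    intro s; simp [Function.comp]; ring
  exact Real.tendsto_exp_atBot.comp h3

include hK in
lemma sE_integral (x : ℝ) : ∫ s in Set.Iic x, s * E K s = -(E K x) / K := by
  have hderiv : ∀ s ∈ Set.Iic x, HasDerivAt (fun t => -(E K t) / K) (s * E K s) s := by
    intro s _
    have := ((E_deriv (K := K) s).neg).div_const K
    refine this.congr_deriv ?_
    unfold E
    field_simp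
  have htend : Tendsto (fun t => -(E K t) / K) atBot (nhds 0) := by
    have := ((E_tendsto_bot hK).neg).div_const K
    simpa using this
  have := MeasureTheory.integral_Iic_of_hasDerivAt_of_tendsto' hderiv
    ((sE_int hK).integrableOn) htend
  rw [this]; ring

include hK in
lemma mills (x : ℝ) : -(K * x * F K x) ≤ E K x := by
  rcases le_or_gt 0 x with hx | hx
  · have h1 : 0 ≤ K * x * F K x := mul_nonneg (mul_nonneg hK.le hx) (F_nonneg x)
    have := E_pos (K := K) x
    linarith
  · have hcmp : F K x ≤ ∫ s in Set.Iic x, (1/x) * (s * E K s) := by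
      apply setIntegral_mono_on (E_int hK).integrableOn
        (((sE_int hK).const_mul (1/x)).integrableOn) measurableSet_Iic
      intro s hs
      have hs' : s ≤ x := hs
      have h1 : 1 ≤ s / x := by
        rw [le_div_iff_of_neg hx]; linarith
      have := mul_le_mul_of_nonneg_right h1 (E_pos (K := K) s).le
      calc E K s = 1 * E K s := (one_mul _).symm
        _ ≤ (s / x) * E K s := this
        _ = 1/x * (s * E K s) := by ring
    rw [MeasureTheory.integral_const_mul, sE_integral hK] at hcmp
    have hx' : (0:ℝ) ≤ -(K * x) := by nlinarith
    have h2 := mul_le_mul_of_nonneg_left hcmp hx'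
    have h3 : -(K * x) * (1/x * (-(E K x)/K)) = E K x := by
      field_simp
      rw [div_eq_iff (ne_of_lt hx)]
      ring
    linarith

include hK in
lemma hazard {x y : ℝ} (hxy : x ≤ y) : F K x * E K y ≤ E K x * F K y := by
  set g : ℝ → ℝ := fun t => E K x * F K t - F K x * E K t with hg
  have hgd : ∀ t, HasDerivAt g (E K t * (E K x + K * t * F K x)) t := by
    intro t
    have h1 := ((F_deriv hK t).const_mul (E K x)).sub
      ((E_deriv (K := K) t).const_mul (F K x))
    refine h1.congr_deriv ?_
    ring
  have hmono : MonotoneOn g (Set.Ici x) := by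
    apply monotoneOn_of_deriv_nonneg (convex_Ici x)
      (continuous_iff_continuousAt.mpr fun t => (hgd t).continuousAt).continuousOn
      (fun t _ => (hgd t).differentiableAt.differentiableWithinAt)
    intro t ht
    rw [interior_Ici] at ht
    rw [(hgd t).deriv]
    have h2 : K * x * F K x ≤ K * t * F K x :=
      mul_le_mul_of_nonneg_right (mul_le_mul_of_nonneg_left (le_of_lt ht) hK.le) (F_nonneg x)
    have h3 := mills hK x
    have := E_pos (K := K) t
    have h4 : 0 ≤ E K x + K * t * F K x := by linarith
    positivity
  have h5 := hmono (Set.self_mem_Ici) (show y ∈ Set.Ici x from hxy) hxy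
  have h6 : g x = 0 := by simp [hg]; ring
  have h7 : 0 ≤ g y := by linarith
  simp only [hg] at h7
  linarith

include hK in
lemma cT : Real.sqrt (K / (2 * Real.pi)) * (∫ s, E K s) = 1 := by
  have hpi := Real.pi_pos
  rw [E_eq, integral_gaussian, ← Real.sqrt_mul (by positivity)]
  rw [show K / (2 * Real.pi) * (Real.pi / (K / 2)) = 1 by field_simp]
  exact Real.sqrt_one

lemma alg {t T M Ea Eb FD : ℝ} (ht0 : 0 < t) (ht1 : t ≤ 1) (hT : 0 < T) (hM : 0 < M)
    (hMT : M ≤ T) (hEa : 0 < Ea) (hFD : 0 < FD)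
    (h1 : (FD + t * M) * Ea ≤ Eb * (t * T)) :
    Ea * ((T + FD) * M) ≤ Eb * (T * T) := by
  have h2 : 0 ≤ Eb * T - Ea * M := by
    nlinarith [mul_nonneg hFD.le hEa.le]
  nlinarith [mul_le_mul_of_nonneg_left h1 hT.le,
    mul_nonneg (mul_nonneg (sub_nonneg.2 ht1) hT.le) h2,
    mul_nonneg (mul_nonneg (sub_nonneg.2 hMT) hFD.le) hEa.le]

end Stmt0Aux

set_option maxHeartbeats 1000000 in
open Stmt0Aux in
/-- For every K > 0, D ∈ (0,∞) and θ ∈ (0,1),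
`I_{(K,∞,D)}(θ) > I_{(K,∞,∞)}(θ)`.  Here `a = a(θ)` is characterized by the
hypothesis `ha`, and `I_{(K,∞,D)}(θ)` is the infimum over `ξ ∈ [-D,0]` of the
values `f_{ξ,D}(θ)`, expressed as the `sInf` of the set of such values (with
`b = b(θ)` characterized implicitly). -/
theorem stmt0 (K D θ a : ℝ) (hK : 0 < K) (hD : 0 < D) (hθ : θ ∈ Set.Ioo (0:ℝ) 1)
    (ha : θ = ∫ s in Set.Iic a, Real.sqrt (K / (2 * Real.pi)) * Real.exp (-K * s ^ 2 / 2)) :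
    sInf { y : ℝ | ∃ ξ ∈ Set.Icc (-D) (0:ℝ), ∃ b ∈ Set.Ioo ξ (ξ + D),
        θ = (∫ s in ξ..b, Real.exp (-K * s ^ 2 / 2)) /
              (∫ s in ξ..(ξ + D), Real.exp (-K * s ^ 2 / 2)) ∧
        y = Real.exp (-K * b ^ 2 / 2) /
              (∫ s in ξ..(ξ + D), Real.exp (-K * s ^ 2 / 2)) } >
      Real.sqrt (K / (2 * Real.pi)) * Real.exp (-K * a ^ 2 / 2) := by
  obtain ⟨hθ0, hθ1⟩ := hθ
  have hrw : ∀ x : ℝ, Real.exp (-K * x ^ 2 / 2) = E K x := fun _ => rfl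
  simp only [hrw] at ha ⊢
  set T : ℝ := ∫ s, E K s with hTdef
  have hTpos : 0 < T := T_pos hK
  have hcT : Real.sqrt (K / (2 * Real.pi)) * T = 1 := cT hK
  have hFD : 0 < F K (-D) := F_pos hK (-D)
  have hEa := E_pos (K := K) a
  have hFa : F K a = θ * T := by
    have h0 : θ = Real.sqrt (K / (2 * Real.pi)) * F K a := by
      rw [ha, F, ← MeasureTheory.integral_const_mul]
    linear_combination (-(F K a)) * hcT - T * h0
  have hgoal_rhs : Real.sqrt (K / (2 * Real.pi)) * E K a = E K a / T := by
    rw [eq_div_iff hTpos.ne']; linear_combination (E K a) * hcT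
  rw [hgoal_rhs]
  have hLB : E K a / T < E K a / T * (1 + F K (-D) / T) := by
    have h1 : 0 < F K (-D) / T := div_pos hFD hTpos
    nlinarith [div_pos hEa hTpos]
  refine lt_of_lt_of_le hLB (le_csInf ?_ ?_)
  · -- the set is nonempty
    have hlt : -(D/2) < -(D/2) + D := by linarith
    set M0 : ℝ := ∫ s in (-(D/2))..(-(D/2) + D), E K s with hM0def
    have hM0 : 0 < M0 :=
      intervalIntegral.intervalIntegral_pos_of_pos ((E_cont).intervalIntegrable _ _)
        (fun s => E_pos s) hlt
    have hcont : ContinuousOn (fun y => ∫ s in (-(D/2))..y, E K s)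
        (Set.Icc (-(D/2)) (-(D/2) + D)) :=
      (intervalIntegral.continuous_primitive
        (fun u v => (E_cont).intervalIntegrable u v) (-(D/2))).continuousOn
    have hmem : θ * M0 ∈ Set.Ioo ((fun y => ∫ s in (-(D/2))..y, E K s) (-(D/2)))
        ((fun y => ∫ s in (-(D/2))..y, E K s) (-(D/2) + D)) := by
      constructor
      · simpa using mul_pos hθ0 hM0
      · show θ * M0 < ∫ s in (-(D/2))..(-(D/2) + D), E K s
        rw [← hM0def]
        nlinarith
    obtain ⟨b, hbmem, hbeq⟩ := intermediate_value_Ioo hlt.le hcont hmem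
    have hbeq' : (∫ s in (-(D/2))..b, E K s) = θ * M0 := hbeq
    refine ⟨E K b / M0, -(D/2), ⟨by linarith, by linarith⟩, b, hbmem, ?_, ?_⟩
    · rw [← hM0def, hbeq']
      field_simp
    · rw [← hM0def]
  · -- uniform lower bound for every element of the set
    rintro y ⟨ξ, ⟨hξ1, hξ2⟩, b, ⟨hb1, hb2⟩, hθeq, hyeq⟩
    set M : ℝ := ∫ s in ξ..(ξ + D), E K s with hMdef
    have hMpos : 0 < M :=
      intervalIntegral.intervalIntegral_pos_of_pos ((E_cont).intervalIntegrable _ _)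
        (fun s => E_pos s) (by linarith)
    have hMeq : M = F K (ξ + D) - F K ξ := by
      rw [hMdef, ← F_sub hK]
    rw [eq_div_iff hMpos.ne'] at hθeq
    have hFb : F K b = F K ξ + θ * M := by
      have h3 := F_sub hK ξ b
      linarith [h3, hθeq]
    have hMT : M ≤ T := by
      have h4 := F_le_T hK (ξ + D)
      have h5 := F_nonneg (K := K) ξ
      rw [← hTdef] at h4
      linarith [hMeq]
    have hFξD : F K (-D) ≤ F K ξ := F_mono hK (by linarith)
    rw [hyeq]
    have hform : E K a / T * (1 + F K (-D) / T) = E K a * (T + F K (-D)) / (T * T) := by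
      field_simp
    rw [hform, div_le_div_iff₀ (mul_pos hTpos hTpos) hMpos]
    rcases le_total b a with hba | hab
    · have hhaz := hazard hK hba
      rw [hFa, hFb] at hhaz
      have h1 : (F K (-D) + θ * M) * E K a ≤ E K b * (θ * T) := by
        have h6 := mul_le_mul_of_nonneg_right
          (show F K (-D) + θ * M ≤ F K ξ + θ * M by linarith) hEa.le
        linarith [hhaz, h6]
      have key := alg hθ0 hθ1.le hTpos hMpos hMT hEa hFD h1
      linarith [key]
    · have hhaz := hazard hK (neg_le_neg hab)
      rw [E_even, E_even, F_neg_eq hK, F_neg_eq hK, ← hTdef] at hhaz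
      have hsym : F K (-D) ≤ T - F K (ξ + D) := by
        have h5 := F_neg_eq hK (ξ + D)
        rw [← hTdef] at h5
        have h6 := F_mono hK (show -D ≤ -(ξ + D) by linarith)
        linarith
      have h1 : (F K (-D) + (1 - θ) * M) * E K a ≤ E K b * ((1 - θ) * T) := by
        have h7 : F K (-D) + (1 - θ) * M ≤ T - F K b := by
          rw [hFb]
          linarith [hsym, hMeq]
        have h8 := mul_le_mul_of_nonneg_right h7 hEa.le
        have h9 : E K b * (T - F K a) = E K b * ((1 - θ) * T) := by rw [hFa]; ring
        linarith [hhaz, h8, h9]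
      have key := alg (by linarith : (0:ℝ) < 1 - θ) (by linarith) hTpos hMpos hMT hEa hFD h1
      linarith [key]
end

section
/- Let ψ : ℝ → ℝ be a strictly convex function with ψ(−x) = ψ(x) for all x, and let m := e^{−ψ(x)} dx. Let a < b be real numbers with a + b ≥ 0, and suppose a' > a and b' > a' are real numbers with m((a',b')) = m((a,b)). Then e^{−ψ(a')} + e^{−ψ(b')} < e^{−ψ(a)} + e^{−ψ(b)}; that is, shifting the interval (a,b) to the right strictly decreases its weighted perimeter. -/
open Set MeasureTheory intervalIntegral

/-- An even strictly convex function is strictly monotone on `[0, ∞)`. -/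
lemma stmt5_mono (ψ : ℝ → ℝ) (hψ : StrictConvexOn ℝ Set.univ ψ)
    (hsymm : ∀ x : ℝ, ψ (-x) = ψ x) {x y : ℝ} (hx : 0 ≤ x) (hxy : x < y) :
    ψ x < ψ y := by
  have hy : 0 < y := lt_of_le_of_lt hx hxy
  set t : ℝ := (y - x) / (2 * y) with ht
  have ht0 : 0 < t := div_pos (by linarith) (by linarith)
  have ht1 : t + (1 - t) = 1 := by ring
  have h1t : 0 < 1 - t := by
    rw [ht]; rw [sub_pos, div_lt_one (by positivity)]; linarith
  have hne : (-y : ℝ) ≠ y := by intro h; linarith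
  have hcomb : t • (-y) + (1 - t) • y = x := by
    have h2 : t * (2 * y) = y - x := by rw [ht]; exact div_mul_cancel₀ _ (mul_pos two_pos hy).ne'
    simp only [smul_eq_mul]
    linear_combination (-1 : ℝ) * h2
  have := hψ.2 (Set.mem_univ (-y)) (Set.mem_univ y) hne ht0 h1t ht1
  rw [hcomb, hsymm y] at this
  calc ψ x < t * ψ y + (1 - t) * ψ y := this
    _ = ψ y := by ring

/-- Antiderivative computation: `∫ x in p..q, exp (-(c + σ * (x - p)))`. -/
lemma stmt5_integral_exp_linear (c σ p q : ℝ) (hσ : σ ≠ 0) :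
    (∫ x in p..q, Real.exp (-c - σ * (x - p)))
      = (Real.exp (-c) - Real.exp (-c - σ * (q - p))) / σ := by
  have hderiv : ∀ x ∈ Set.uIcc p q,
      HasDerivAt (fun x => -Real.exp (-c - σ * (x - p)) / σ)
        (Real.exp (-c - σ * (x - p))) x := by
    intro x _
    have h1 : HasDerivAt (fun x : ℝ => -c - σ * (x - p)) (-σ) x := by
      simpa using (((hasDerivAt_id x).sub_const p).const_mul σ).const_sub (-c)
    have h2 := (h1.exp.neg).div_const σ
    refine h2.congr_deriv ?_
    rw [div_eq_iff hσ]; ring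
  have hint : IntervalIntegrable (fun x => Real.exp (-c - σ * (x - p))) volume p q :=
    (Real.continuous_exp.comp (by fun_prop)).intervalIntegrable p q
  rw [intervalIntegral.integral_eq_sub_of_hasDerivAt hderiv hint]
  have h0 : -c - σ * (p - p) = -c := by ring
  rw [h0]
  ring

/-- Core comparison lemma: for a strictly convex `ψ` and `u < v ≤ b < b'` with
`ψ u < ψ v` and `∫_u^v e^{-ψ} ≤ ∫_b^{b'} e^{-ψ}`, the perimeter strictly decreases. -/
lemma stmt5_core (ψ : ℝ → ℝ) (hψ : StrictConvexOn ℝ Set.univ ψ)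
    (hcont : Continuous ψ)
    {u v b b' : ℝ} (huv : u < v) (hvb : v ≤ b) (hbb' : b < b')
    (hψuv : ψ u < ψ v)
    (hint : (∫ x in u..v, Real.exp (-ψ x)) ≤ ∫ x in b..b', Real.exp (-ψ x)) :
    Real.exp (-ψ u) + Real.exp (-ψ b') < Real.exp (-ψ v) + Real.exp (-ψ b) := by
  have hconv := hψ.convexOn
  have hfcont : Continuous fun x => Real.exp (-ψ x) :=
    Real.continuous_exp.comp hcont.neg
  set σ : ℝ := (ψ v - ψ u) / (v - u) with hσdef
  have hvu : 0 < v - u := by linarith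
  have hσpos : 0 < σ := by
    apply div_pos (by linarith) hvu
  -- Step A: chord bound on [u, v]
  have hchord : ∀ x ∈ Set.Icc u v, Real.exp (-ψ u - σ * (x - u)) ≤ Real.exp (-ψ x) := by
    intro x hx
    apply Real.exp_le_exp.mpr
    rcases eq_or_lt_of_le hx.1 with rfl | hux
    · simp
    · have hs := hconv.secant_mono (Set.mem_univ u) (Set.mem_univ x) (Set.mem_univ v)
        (by intro h; exact hux.ne' h) (by intro h; exact (huv.ne' h)) hx.2
      rw [div_le_div_iff₀ (by linarith) hvu] at hs
      have hxu : 0 < x - u := by linarith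
      have : ψ x - ψ u ≤ σ * (x - u) := by
        rw [hσdef]
        rw [div_mul_eq_mul_div, le_div_iff₀ hvu]
        nlinarith [hs]
      linarith
  -- compute the linear-exponential integrals
  have hIuv : (∫ x in u..v, Real.exp (-ψ u - σ * (x - u)))
      = (Real.exp (-ψ u) - Real.exp (-ψ v)) / σ := by
    rw [stmt5_integral_exp_linear (ψ u) σ u v hσpos.ne']
    have : -ψ u - σ * (v - u) = -ψ v := by
      rw [hσdef]; field_simp; ring
    rw [this]
  have hintuv : IntervalIntegrable (fun x => Real.exp (-ψ x)) volume u v :=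
    hfcont.intervalIntegrable u v
  have hintlin : IntervalIntegrable (fun x => Real.exp (-ψ u - σ * (x - u))) volume u v :=
    (Real.continuous_exp.comp (by fun_prop)).intervalIntegrable u v
  have hA : (Real.exp (-ψ u) - Real.exp (-ψ v)) / σ ≤ ∫ x in u..v, Real.exp (-ψ x) := by
    rw [← hIuv]
    exact intervalIntegral.integral_mono_on huv.le hintlin hintuv hchord
  -- Step C: lower chord bound on [b, b']
  have hslope : ∀ x, b < x → σ * (x - b) ≤ ψ x - ψ b := by
    intro x hbx
    have hvx : v < x := lt_of_le_of_lt hvb hbx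
    have h1 : σ ≤ (ψ x - ψ v) / (x - v) :=
      (hconv.slope_mono_adjacent (Set.mem_univ u) (Set.mem_univ x) huv hvx)
    have h2 : (ψ v - ψ x) / (v - x) ≤ (ψ b - ψ x) / (b - x) :=
      hconv.secant_mono (Set.mem_univ x) (Set.mem_univ v) (Set.mem_univ b)
        (by intro h; exact hvx.ne h) hbx.ne hvb
    have h2' : (ψ x - ψ v) / (x - v) ≤ (ψ x - ψ b) / (x - b) := by
      have e1 : (ψ v - ψ x) / (v - x) = (ψ x - ψ v) / (x - v) := by
        rw [← neg_div_neg_eq]; ring_nf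
      have e2 : (ψ b - ψ x) / (b - x) = (ψ x - ψ b) / (x - b) := by
        rw [← neg_div_neg_eq]; ring_nf
      rw [e1, e2] at h2; exact h2
    have h3 : σ ≤ (ψ x - ψ b) / (x - b) := le_trans h1 h2'
    rw [le_div_iff₀ (by linarith)] at h3
    linarith
  have hchord2 : ∀ x ∈ Set.Icc b b', Real.exp (-ψ x) ≤ Real.exp (-ψ b - σ * (x - b)) := by
    intro x hx
    apply Real.exp_le_exp.mpr
    rcases eq_or_lt_of_le hx.1 with rfl | hbx
    · simp
    · have := hslope x hbx
      linarith
  have hIbb : (∫ x in b..b', Real.exp (-ψ b - σ * (x - b)))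
      = (Real.exp (-ψ b) - Real.exp (-ψ b - σ * (b' - b))) / σ :=
    stmt5_integral_exp_linear (ψ b) σ b b' hσpos.ne'
  have hintbb : IntervalIntegrable (fun x => Real.exp (-ψ x)) volume b b' :=
    hfcont.intervalIntegrable b b'
  have hintlin2 : IntervalIntegrable (fun x => Real.exp (-ψ b - σ * (x - b))) volume b b' :=
    (Real.continuous_exp.comp (by fun_prop)).intervalIntegrable b b'
  have hC : (∫ x in b..b', Real.exp (-ψ x))
      ≤ (Real.exp (-ψ b) - Real.exp (-ψ b - σ * (b' - b))) / σ := by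
    rw [← hIbb]
    exact intervalIntegral.integral_mono_on hbb'.le hintbb hintlin2 hchord2
  -- Step D: strict inequality at b'
  have hD : Real.exp (-ψ b') < Real.exp (-ψ b - σ * (b' - b)) := by
    apply Real.exp_lt_exp.mpr
    have hvb' : v < b' := lt_of_le_of_lt hvb hbb'
    have h1 : σ < (ψ b' - ψ v) / (b' - v) :=
      hψ.slope_strict_mono_adjacent (Set.mem_univ u) (Set.mem_univ b') huv hvb'
    have h2 : (ψ v - ψ b') / (v - b') ≤ (ψ b - ψ b') / (b - b') :=
      hconv.secant_mono (Set.mem_univ b') (Set.mem_univ v) (Set.mem_univ b)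
        (by intro h; exact hvb'.ne h) (by intro h; exact hbb'.ne h) hvb
    have h2' : (ψ b' - ψ v) / (b' - v) ≤ (ψ b' - ψ b) / (b' - b) := by
      have e1 : (ψ v - ψ b') / (v - b') = (ψ b' - ψ v) / (b' - v) := by
        rw [← neg_div_neg_eq]; ring_nf
      have e2 : (ψ b - ψ b') / (b - b') = (ψ b' - ψ b) / (b' - b) := by
        rw [← neg_div_neg_eq]; ring_nf
      rw [e1, e2] at h2; exact h2
    have h3 : σ < (ψ b' - ψ b) / (b' - b) := lt_of_lt_of_le h1 h2'
    rw [lt_div_iff₀ (by linarith)] at h3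
    linarith
  -- Combine
  have key1 : Real.exp (-ψ u) - Real.exp (-ψ v) ≤ σ * ∫ x in u..v, Real.exp (-ψ x) := by
    have := mul_le_mul_of_nonneg_left hA hσpos.le
    rwa [mul_div_cancel₀ _ hσpos.ne'] at this
  have key2 : σ * (∫ x in b..b', Real.exp (-ψ x))
      ≤ Real.exp (-ψ b) - Real.exp (-ψ b - σ * (b' - b)) := by
    have := mul_le_mul_of_nonneg_left hC hσpos.le
    rwa [mul_div_cancel₀ _ hσpos.ne'] at this
  have key3 : σ * (∫ x in u..v, Real.exp (-ψ x)) ≤ σ * ∫ x in b..b', Real.exp (-ψ x) :=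
    mul_le_mul_of_nonneg_left hint hσpos.le
  linarith

/-- for a strictly convex symmetric `ψ` and `m = e^{-ψ} dx`,
right-shifting an interval `(a,b)` with `a + b ≥ 0` while preserving its
`m`-measure strictly decreases its weighted perimeter
`e^{-ψ(a)} + e^{-ψ(b)}`. -/
theorem stmt5 (ψ : ℝ → ℝ) (hψ : StrictConvexOn ℝ Set.univ ψ)
    (hsymm : ∀ x : ℝ, ψ (-x) = ψ x)
    (a b a' b' : ℝ) (hab : a < b) (habs : 0 ≤ a + b)
    (ha' : a < a') (hb' : a' < b')
    (hmeas : (∫ x in a'..b', Real.exp (-ψ x)) = ∫ x in a..b, Real.exp (-ψ x)) :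
    Real.exp (-ψ a') + Real.exp (-ψ b') < Real.exp (-ψ a) + Real.exp (-ψ b) := by
  have hcont : Continuous ψ :=
    continuousOn_univ.mp (hψ.convexOn.continuousOn isOpen_univ)
  have hfcont : Continuous fun x => Real.exp (-ψ x) := Real.continuous_exp.comp hcont.neg
  have hInt : ∀ p q : ℝ, IntervalIntegrable (fun x => Real.exp (-ψ x)) volume p q :=
    fun p q => hfcont.intervalIntegrable p q
  -- the two "flanking" integrals agree
  have key : (∫ x in b..b', Real.exp (-ψ x)) = ∫ x in a..a', Real.exp (-ψ x) := by
    have h1 : (∫ x in a..a', Real.exp (-ψ x)) + (∫ x in a'..b', Real.exp (-ψ x))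
        = ∫ x in a..b', Real.exp (-ψ x) :=
      intervalIntegral.integral_add_adjacent_intervals (hInt a a') (hInt a' b')
    have h2 : (∫ x in a..b, Real.exp (-ψ x)) + (∫ x in b..b', Real.exp (-ψ x))
        = ∫ x in a..b', Real.exp (-ψ x) :=
      intervalIntegral.integral_add_adjacent_intervals (hInt a b) (hInt b b')
    linarith
  have haa'pos : 0 < ∫ x in a..a', Real.exp (-ψ x) :=
    intervalIntegral_pos_of_pos (hInt a a') (fun x => Real.exp_pos _) ha'
  have hbb' : b < b' := by
    by_contra h
    push_neg at h
    have h0 : 0 ≤ ∫ x in b'..b, Real.exp (-ψ x) :=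
      intervalIntegral.integral_nonneg h (fun x _ => (Real.exp_pos _).le)
    have h1 : (∫ x in b..b', Real.exp (-ψ x)) = -∫ x in b'..b, Real.exp (-ψ x) :=
      intervalIntegral.integral_symm b' b
    linarith
  have hb0 : 0 < b := by linarith
  by_cases hcase : ψ a ≤ ψ a'
  · -- easy case: the left endpoint value does not increase
    have h1 : Real.exp (-ψ a') ≤ Real.exp (-ψ a) := Real.exp_le_exp.mpr (by linarith)
    have h2 : Real.exp (-ψ b') < Real.exp (-ψ b) := by
      apply Real.exp_lt_exp.mpr
      have := stmt5_mono ψ hψ hsymm hb0.le hbb'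
      linarith
    linarith
  · push_neg at hcase
    -- here ψ a' < ψ a; reflect to [0,∞)
    set u : ℝ := |a'| with hu
    set v : ℝ := -a with hv
    have hψu : ψ u = ψ a' := by
      rcases abs_cases a' with ⟨h, _⟩ | ⟨h, _⟩
      · rw [hu, h]
      · rw [hu, h, hsymm]
    have hψv : ψ v = ψ a := hsymm a
    have hu0 : 0 ≤ u := abs_nonneg a'
    have ha0 : a < 0 := by
      by_contra h
      push_neg at h
      have := stmt5_mono ψ hψ hsymm h ha'
      linarith
    have hv0 : 0 < v := by rw [hv]; linarith
    have huv : u < v := by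
      by_contra h
      push_neg at h
      rcases eq_or_lt_of_le h with heq | hlt
      · rw [heq, hψu] at hψv; linarith
      · have := stmt5_mono ψ hψ hsymm hv0.le hlt
        rw [hψu, hψv] at this
        linarith
    have hvb : v ≤ b := by rw [hv]; linarith
    have hψuv : ψ u < ψ v := by rw [hψu, hψv]; exact hcase
    -- ∫ u..v = ∫ a..(-u) ≤ ∫ a..a'
    have hveq : -v = a := by rw [hv]; ring
    have hrefl : (∫ x in u..v, Real.exp (-ψ x)) = ∫ x in (-v)..(-u), Real.exp (-ψ x) := by
      rw [← intervalIntegral.integral_comp_neg (fun x => Real.exp (-ψ x))]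
      apply intervalIntegral.integral_congr
      intro x _
      simp [hsymm]
    have hnu : -u ≤ a' := neg_abs_le a'
    have hanu : a ≤ -u := by
      rw [← hveq]; exact neg_le_neg huv.le
    have hsplit : (∫ x in a..(-u), Real.exp (-ψ x)) + (∫ x in (-u)..a', Real.exp (-ψ x))
        = ∫ x in a..a', Real.exp (-ψ x) :=
      intervalIntegral.integral_add_adjacent_intervals (hInt a (-u)) (hInt (-u) a')
    have hnn : 0 ≤ ∫ x in (-u)..a', Real.exp (-ψ x) :=
      intervalIntegral.integral_nonneg hnu (fun x _ => (Real.exp_pos _).le)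
    have hintuv : (∫ x in u..v, Real.exp (-ψ x)) ≤ ∫ x in b..b', Real.exp (-ψ x) := by
      rw [hrefl, hveq, key]
      linarith
    have := stmt5_core ψ hψ hcont huv hvb hbb' hψuv hintuv
    rw [hψu, hψv] at this
    exact this
end

section
/- For every K > 0, N < 0, D ∈ (0,∞) and θ ∈ (0,1), one has K_{3,D}(θ) > I_{(K,N,∞)}(θ). -/
open Set MeasureTheory intervalIntegral

private lemma cosh_le_aux {x y : ℝ} (hxy : y ≤ x) :
    Real.cosh x ≤ Real.cosh y * Real.exp (x - y) := by
  rw [Real.cosh_eq, Real.cosh_eq]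
  have h1 : Real.exp (x - y) * Real.exp y = Real.exp x := by
    rw [← Real.exp_add]; ring_nf
  have h2 : Real.exp (-x) ≤ Real.exp (x - y) * Real.exp (-y) := by
    rw [← Real.exp_add]; exact Real.exp_le_exp.2 (by linarith)
  nlinarith [Real.exp_pos y, Real.exp_pos (x - y)]

/-- `K_{3,D}(θ) > I_{(K,N,∞)}(θ)` for all `K > 0`, `N < 0`,
`D ∈ (0,∞)`, `θ ∈ (0,1)`.  Here `σ = K/(1-N)`, `c = c(θ)` is characterized by
`hc`, and `d₃ = d₃(θ) ∈ (0,D)` is characterized by `hd₃`. -/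
theorem stmt10 (K N σ D θ : ℝ) (hK : 0 < K) (hN : N < 0) (hσ : σ = K / (1 - N))
    (hD : 0 < D) (hθ : θ ∈ Set.Ioo (0:ℝ) 1)
    (c : ℝ)
    (hc : θ = (∫ s in Set.Iic c, Real.cosh (Real.sqrt σ * s) ^ (N - 1)) /
        (∫ s : ℝ, Real.cosh (Real.sqrt σ * s) ^ (N - 1)))
    (d₃ : ℝ) (hd₃mem : d₃ ∈ Set.Ioo 0 D)
    (hd₃ : θ = (∫ s in (0:ℝ)..d₃, Real.exp ((N - 1) * Real.sqrt σ * s)) /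
        (∫ s in (0:ℝ)..D, Real.exp ((N - 1) * Real.sqrt σ * s))) :
    Real.exp ((N - 1) * Real.sqrt σ * d₃) /
        (∫ s in (0:ℝ)..D, Real.exp ((N - 1) * Real.sqrt σ * s)) >
      Real.cosh (Real.sqrt σ * c) ^ (N - 1) /
        (∫ s : ℝ, Real.cosh (Real.sqrt σ * s) ^ (N - 1)) := by
  obtain ⟨hθ0, hθ1⟩ := hθ
  have hσpos : 0 < σ := by rw [hσ]; exact div_pos hK (by linarith)
  set r := Real.sqrt σ with hrdef
  have hrpos : 0 < r := Real.sqrt_pos.2 hσpos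
  set β : ℝ := (1 - N) * r with hβ
  have hβpos : 0 < β := mul_pos (by linarith) hrpos
  have hα : (N - 1) * r = -β := by rw [hβ]; ring
  have hAneg : (N - 1) * r < 0 := by rw [hα]; linarith
  set h : ℝ → ℝ := fun s => Real.cosh (r * s) ^ (N - 1) with hh
  have hhpos : ∀ s, 0 < h s := fun s => Real.rpow_pos_of_pos (Real.cosh_pos _) _
  set m : ℝ := ∫ s : ℝ, h s with hm
  have hcc : Real.cosh (r * c) ^ (N - 1) = h c := rfl
  rw [hcc]
  -- denominator nonzero, integrability
  have hm0 : m ≠ 0 := by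
    intro h0
    rw [hc, h0, div_zero] at hθ0
    exact lt_irrefl 0 hθ0
  have hint : Integrable h := by
    by_contra hni
    exact hm0 (MeasureTheory.integral_undef hni)
  have hIic : IntegrableOn h (Iic c) := hint.integrableOn
  have hIoi : IntegrableOn h (Ioi c) := hint.integrableOn
  have hmpos : 0 < m :=
    lt_of_le_of_ne (MeasureTheory.integral_nonneg fun s => (hhpos s).le) (Ne.symm hm0)
  rw [eq_div_iff hm0] at hc
  have htail : ∫ s in Ioi c, h s = (1 - θ) * m := by
    have hsum := integral_Iic_add_Ioi hIic hIoi (b := c)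
    rw [← hm] at hsum
    linarith [hsum, hc]
  -- pointwise lower bound for the tail density
  have hpt : ∀ s ∈ Ioi c, (h c * Real.exp (β * c)) * Real.exp (-β * s) ≤ h s := by
    intro s hs
    have hsc : c ≤ s := le_of_lt hs
    have h1 : Real.cosh (r * s) ≤ Real.cosh (r * c) * Real.exp (r * s - r * c) :=
      cosh_le_aux (by nlinarith)
    have h2 : (Real.cosh (r * c) * Real.exp (r * s - r * c)) ^ (N - 1) ≤ h s :=
      Real.rpow_le_rpow_of_nonpos (Real.cosh_pos _) h1 (by linarith)
    have h3 : (Real.cosh (r * c) * Real.exp (r * s - r * c)) ^ (N - 1)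
        = (h c * Real.exp (β * c)) * Real.exp (-β * s) := by
      rw [Real.mul_rpow (Real.cosh_pos _).le (Real.exp_nonneg _), ← Real.exp_mul,
        mul_assoc, ← Real.exp_add]
      congr 2
      rw [hβ]; ring
    rw [← h3]; exact h2
  have hg_int : IntegrableOn (fun s => (h c * Real.exp (β * c)) * Real.exp (-β * s)) (Ioi c) :=
    (exp_neg_integrableOn_Ioi c hβpos).const_mul _
  have hkey : ∫ s in Ioi c, (h c * Real.exp (β * c)) * Real.exp (-β * s)
      ≤ ∫ s in Ioi c, h s :=
    MeasureTheory.setIntegral_mono_on hg_int hIoi measurableSet_Ioi hpt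
  have hgval : ∫ s in Ioi c, (h c * Real.exp (β * c)) * Real.exp (-β * s) = h c / β := by
    rw [MeasureTheory.integral_const_mul]
    have hinner : ∫ s in Ioi c, Real.exp (-β * s) = β⁻¹ * Real.exp (-(β * c)) := by
      have hcomp := integral_comp_mul_left_Ioi (fun x => Real.exp (-x)) c hβpos
      simp only [smul_eq_mul] at hcomp
      rw [integral_exp_neg_Ioi] at hcomp
      simpa [neg_mul] using hcomp
    rw [hinner, Real.exp_neg]
    field_simp
  have hIle : h c / m ≤ β * (1 - θ) := by
    have h4 : h c / β ≤ (1 - θ) * m := by rw [← hgval, ← htail]; exact hkey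
    rw [div_le_iff₀ hβpos] at h4
    rw [div_le_iff₀ hmpos]
    nlinarith
  -- the exponential model side
  have hAne : (N - 1) * r ≠ 0 := ne_of_lt hAneg
  have hIx : ∀ x : ℝ, ∫ s in (0:ℝ)..x, Real.exp ((N - 1) * r * s)
      = (Real.exp ((N - 1) * r * x) - 1) / ((N - 1) * r) := by
    intro x
    rw [integral_comp_mul_left Real.exp hAne, integral_exp]
    rw [mul_zero, Real.exp_zero, smul_eq_mul]
    ring
  have hE1 : Real.exp ((N - 1) * r * D) < 1 :=
    Real.exp_lt_one_iff.mpr (mul_neg_of_neg_of_pos hAneg hD)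
  have hE0 : (0:ℝ) < Real.exp ((N - 1) * r * D) := Real.exp_pos _
  have hEone : Real.exp ((N - 1) * r * D) - 1 ≠ 0 := ne_of_lt (by linarith)
  have hMpos : 0 < (Real.exp ((N - 1) * r * D) - 1) / ((N - 1) * r) :=
    div_pos_of_neg_of_neg (by linarith) hAneg
  rw [hIx d₃, hIx D, div_div_div_cancel_right₀ hAne, eq_div_iff hEone] at hd₃
  rw [hIx D, gt_iff_lt]
  refine lt_of_le_of_lt hIle ?_
  rw [lt_div_iff₀ hMpos]
  rw [hα] at hd₃ ⊢
  have hb0 : β ≠ 0 := ne_of_gt hβpos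
  clear_value β
  have h7 : β * (1 - θ) * ((Real.exp (-β * D) - 1) / -β)
      = (1 - θ) * (1 - Real.exp (-β * D)) := by
    have hneg : (Real.exp (-β * D) - 1) / -β = (1 - Real.exp (-β * D)) / β := by
      rw [div_neg, ← neg_div, neg_sub]
    rw [hneg, mul_comm β (1 - θ), mul_assoc, ← mul_div_assoc,
      mul_div_cancel_left₀ _ hb0]
  rw [h7]
  nlinarith [Real.exp_pos (-β * D), Real.exp_pos (-β * d₃)]
end

section
/- For every K > 0, N < 0, D ∈ (0,∞) and θ ∈ (0,1), one has K_{2,D}(θ) > I_{(K,N,∞)}(θ). -/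
open Set MeasureTheory intervalIntegral

lemma aux_cosh_lt_mul_exp (x : ℝ) {y : ℝ} (hy : 0 < y) :
    Real.cosh (x + y) < Real.cosh x * Real.exp y := by
  have h1 : Real.sinh x < Real.cosh x := by
    nlinarith [Real.cosh_sub_sinh x, Real.exp_pos (-x)]
  have h2 : 0 < Real.sinh y := Real.sinh_pos_iff.2 hy
  have h3 : Real.cosh y + Real.sinh y = Real.exp y := Real.cosh_add_sinh y
  have h4 : Real.cosh x * Real.exp y
      = Real.cosh x * Real.cosh y + Real.cosh x * Real.sinh y := by rw [← h3]; ring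
  have h5 : Real.sinh x * Real.sinh y < Real.cosh x * Real.sinh y :=
    mul_lt_mul_of_pos_right h1 h2
  rw [Real.cosh_add, h4]
  linarith

lemma aux_sinh_mul_exp_le (x : ℝ) {y : ℝ} (hy : 0 ≤ y) :
    Real.sinh x * Real.exp y ≤ Real.sinh (x + y) := by
  have h1 : Real.sinh x ≤ Real.cosh x := by
    nlinarith [Real.cosh_sub_sinh x, Real.exp_pos (-x)]
  have h2 : 0 ≤ Real.sinh y := Real.sinh_nonneg_iff.2 hy
  have h3 : Real.cosh y + Real.sinh y = Real.exp y := Real.cosh_add_sinh y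
  have h4 : Real.sinh x * Real.exp y
      = Real.sinh x * Real.cosh y + Real.sinh x * Real.sinh y := by rw [← h3]; ring
  have h5 : Real.sinh x * Real.sinh y ≤ Real.cosh x * Real.sinh y :=
    mul_le_mul_of_nonneg_right h1 h2
  rw [Real.sinh_add, h4]
  linarith

lemma aux_rpow_mul_exp {a : ℝ} (ha : 0 < a) (b z : ℝ) :
    (a * Real.exp b) ^ z = a ^ z * Real.exp (z * b) := by
  rw [Real.mul_rpow ha.le (Real.exp_pos b).le, ← Real.exp_mul, mul_comm b z]

lemma aux_exp_cont (lam a : ℝ) : Continuous (fun s : ℝ => Real.exp (-lam * (s - a))) :=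
  Real.continuous_exp.comp (continuous_const.mul (continuous_id.sub continuous_const))

lemma aux_exp_deriv (lam a : ℝ) (hlam : lam ≠ 0) (s : ℝ) :
    HasDerivAt (fun t => -(1 / lam) * Real.exp (-lam * (t - a)))
      (Real.exp (-lam * (s - a))) s := by
  have h1 : HasDerivAt (fun t : ℝ => -lam * (t - a)) (-lam) s := by
    simpa using ((hasDerivAt_id s).sub_const a).const_mul (-lam)
  have h2 := (h1.exp).const_mul (-(1 / lam))
  refine h2.congr_deriv ?_
  field_simp

lemma aux_interval_exp_le {lam : ℝ} (hlam : 0 < lam) {a b : ℝ} (hab : a ≤ b) :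
    ∫ s in a..b, Real.exp (-lam * (s - a)) ≤ 1 / lam := by
  rw [intervalIntegral.integral_eq_sub_of_hasDerivAt
    (fun s _ => aux_exp_deriv lam a hlam.ne' s) ((aux_exp_cont lam a).intervalIntegrable a b)]
  have h0 : 0 < Real.exp (-lam * (b - a)) := Real.exp_pos _
  have e1 : -lam * (a - a) = 0 := by ring
  rw [e1, Real.exp_zero]
  have h2 : 0 < (1 / lam) * Real.exp (-lam * (b - a)) := by positivity
  nlinarith

lemma aux_Ioi_exp_int {lam : ℝ} (hlam : 0 < lam) (c : ℝ) :
    IntegrableOn (fun s => Real.exp (-lam * (s - c))) (Set.Ioi c) := by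
  have h := (exp_neg_integrableOn_Ioi c hlam).const_mul (Real.exp (lam * c))
  have e : (fun s : ℝ => Real.exp (-lam * (s - c)))
      = fun s => Real.exp (lam * c) * Real.exp (-lam * s) := by
    funext s; rw [← Real.exp_add]; ring_nf
  rw [e]; exact h

lemma aux_Ioi_exp_val {lam : ℝ} (hlam : 0 < lam) (c : ℝ) :
    ∫ s in Set.Ioi c, Real.exp (-lam * (s - c)) = 1 / lam := by
  have htend : Filter.Tendsto (fun t => -(1 / lam) * Real.exp (-lam * (t - c)))
      Filter.atTop (nhds 0) := by
    have h1 : Filter.Tendsto (fun t : ℝ => -lam * (t - c)) Filter.atTop Filter.atBot := by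
      have := (Filter.tendsto_atTop_add_const_right Filter.atTop (-c) Filter.tendsto_id
        ).const_mul_atTop_of_neg (neg_neg_iff_pos.2 hlam)
      simpa [sub_eq_add_neg] using this
    have h2 := (Real.tendsto_exp_atBot.comp h1).const_mul (-(1 / lam))
    simpa using h2
  have := MeasureTheory.integral_Ioi_of_hasDerivAt_of_tendsto
    ((continuous_const.mul (aux_exp_cont lam c)).continuousWithinAt)
    (fun s _ => aux_exp_deriv lam c hlam.ne' s) (aux_Ioi_exp_int hlam c) htend
  rw [this]
  have e1 : -lam * (c - c) = 0 := by ring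
  simp only [Pi.mul_apply, e1, Real.exp_zero]
  ring

lemma aux_sinh_contOn {N q a b : ℝ} (hq : 0 < q) (ha : 0 < a) (hb : 0 < b) :
    ContinuousOn (fun s => Real.sinh (q * s) ^ (N - 1)) (Set.uIcc a b) := by
  apply ContinuousOn.rpow_const
  · exact (Real.continuous_sinh.comp (continuous_const.mul continuous_id)).continuousOn
  · intro x hx
    have hx0 : 0 < x := lt_of_lt_of_le (lt_min ha hb) hx.1
    exact Or.inl (Real.sinh_pos_iff.2 (mul_pos hq hx0)).ne'

lemma aux_sinh_intgb {N q a b : ℝ} (hq : 0 < q) (ha : 0 < a) (hb : 0 < b) :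
    IntervalIntegrable (fun s => Real.sinh (q * s) ^ (N - 1)) volume a b :=
  (aux_sinh_contOn hq ha hb).intervalIntegrable

lemma aux_M_pos {N q a b : ℝ} (hz : N - 1 < 0) (hq : 0 < q) (ha : 0 < a) (hab : a < b) :
    0 < ∫ s in a..b, Real.sinh (q * s) ^ (N - 1) := by
  refine intervalIntegral.intervalIntegral_pos_of_pos_on
    (aux_sinh_intgb hq ha (ha.trans hab)) (fun x hx => ?_) hab
  exact Real.rpow_pos_of_pos (Real.sinh_pos_iff.2 (mul_pos hq (ha.trans hx.1))) _

lemma partB {N q lam D θ : ℝ} (hz : N - 1 < 0) (hq : 0 < q) (hlam : lam = (1 - N) * q)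
    (hD : 0 < D) (hθ1 : θ < 1) {ξ d : ℝ} (hξ : 0 < ξ) (hd : d ∈ Set.Ioo ξ (ξ + D))
    (hθd : θ = (∫ s in ξ..d, Real.sinh (q * s) ^ (N - 1)) /
      (∫ s in ξ..(ξ + D), Real.sinh (q * s) ^ (N - 1))) :
    lam * (1 - θ) ≤ Real.sinh (q * d) ^ (N - 1) /
      (∫ s in ξ..(ξ + D), Real.sinh (q * s) ^ (N - 1)) := by
  have hlampos : 0 < lam := by
    rw [hlam]; exact mul_pos (by nlinarith) hq
  set f : ℝ → ℝ := fun s => Real.sinh (q * s) ^ (N - 1) with hf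
  have hdpos : 0 < d := hξ.trans hd.1
  have hbpos : 0 < ξ + D := by linarith
  set M : ℝ := ∫ s in ξ..(ξ + D), f s with hM
  have hMpos : 0 < M := aux_M_pos hz hq hξ (by linarith)
  have hfd : 0 < f d := Real.rpow_pos_of_pos (Real.sinh_pos_iff.2 (mul_pos hq hdpos)) _
  -- θ * M = ∫ ξ..d f
  have h1 : (∫ s in ξ..d, f s) = θ * M := by
    rw [eq_div_iff hMpos.ne'] at hθd; exact hθd.symm
  have hadd : (∫ s in ξ..d, f s) + (∫ s in d..(ξ + D), f s) = M :=
    intervalIntegral.integral_add_adjacent_intervals (aux_sinh_intgb hq hξ hdpos)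
      (aux_sinh_intgb hq hdpos hbpos)
  have h2 : (∫ s in d..(ξ + D), f s) = (1 - θ) * M := by linarith
  -- pointwise bound
  have h3 : ∀ s ∈ Set.Icc d (ξ + D), f s ≤ f d * Real.exp (-lam * (s - d)) := by
    intro s hs
    have hsd : 0 ≤ q * (s - d) := mul_nonneg hq.le (by linarith [hs.1])
    have key : Real.sinh (q * d) * Real.exp (q * (s - d)) ≤ Real.sinh (q * s) := by
      have := aux_sinh_mul_exp_le (q * d) hsd
      have e : q * d + q * (s - d) = q * s := by ring
      rwa [e] at this
    have hsinhd : 0 < Real.sinh (q * d) := Real.sinh_pos_iff.2 (mul_pos hq hdpos)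
    have hsinhs : 0 < Real.sinh (q * s) :=
      Real.sinh_pos_iff.2 (mul_pos hq (hdpos.trans_le hs.1))
    have hprod : 0 < Real.sinh (q * d) * Real.exp (q * (s - d)) :=
      mul_pos hsinhd (Real.exp_pos _)
    have step : f s ≤ (Real.sinh (q * d) * Real.exp (q * (s - d))) ^ (N - 1) :=
      (Real.rpow_le_rpow_iff_of_neg hsinhs hprod hz).2 key
    have e2 : (Real.sinh (q * d) * Real.exp (q * (s - d))) ^ (N - 1)
        = f d * Real.exp (-lam * (s - d)) := by
      rw [aux_rpow_mul_exp hsinhd]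
      congr 1
      rw [hlam]; ring
    rwa [e2] at step
  have h4 : (∫ s in d..(ξ + D), f s) ≤ f d * (1 / lam) := by
    calc (∫ s in d..(ξ + D), f s)
        ≤ ∫ s in d..(ξ + D), f d * Real.exp (-lam * (s - d)) := by
          refine intervalIntegral.integral_mono_on (by linarith [hd.2]) ?_ ?_ h3
          · exact aux_sinh_intgb hq hdpos hbpos
          · exact (continuous_const.mul (aux_exp_cont lam d)).intervalIntegrable _ _
      _ = f d * ∫ s in d..(ξ + D), Real.exp (-lam * (s - d)) := by
          rw [intervalIntegral.integral_const_mul]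
      _ ≤ f d * (1 / lam) :=
          mul_le_mul_of_nonneg_left (aux_interval_exp_le hlampos (by linarith [hd.2])) hfd.le
  rw [le_div_iff₀ hMpos]
  have h5 : lam * ((1 - θ) * M) ≤ lam * (f d * (1 / lam)) := by
    rw [← h2]; exact mul_le_mul_of_nonneg_left h4 hlampos.le
  have h6 : lam * (f d * (1 / lam)) = f d := by field_simp
  nlinarith [h5, h6]

lemma partA {N q lam θ c : ℝ} (hN : N < 0) (hq : 0 < q) (hlam : lam = (1 - N) * q)
    (hθ : θ ∈ Set.Ioo (0:ℝ) 1)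
    (hc : θ = (∫ s in Set.Iic c, Real.cosh (q * s) ^ (N - 1)) /
        (∫ s : ℝ, Real.cosh (q * s) ^ (N - 1))) :
    Real.cosh (q * c) ^ (N - 1) / (∫ s : ℝ, Real.cosh (q * s) ^ (N - 1))
      < lam * (1 - θ) := by
  have hz : N - 1 < 0 := by linarith
  have hlampos : 0 < lam := by rw [hlam]; exact mul_pos (by linarith) hq
  set g : ℝ → ℝ := fun s => Real.cosh (q * s) ^ (N - 1) with hg
  have hgpos : ∀ s, 0 < g s := fun s => Real.rpow_pos_of_pos (Real.cosh_pos _) _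
  have hgcont : Continuous g :=
    (Real.continuous_cosh.comp (continuous_const.mul continuous_id)).rpow_const
      (fun x => Or.inl (Real.cosh_pos _).ne')
  -- integrability
  have hbound : ∀ s : ℝ, g s ≤ (2:ℝ)⁻¹ ^ (N - 1) * Real.exp (-lam * s) := by
    intro s
    have hcosh_ge : (2:ℝ)⁻¹ * Real.exp (q * s) ≤ Real.cosh (q * s) := by
      rw [Real.cosh_eq]
      have := Real.exp_pos (-(q * s))
      nlinarith
    have hp : (0:ℝ) < (2:ℝ)⁻¹ * Real.exp (q * s) := by positivity
    have step : g s ≤ ((2:ℝ)⁻¹ * Real.exp (q * s)) ^ (N - 1) :=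
      (Real.rpow_le_rpow_iff_of_neg (Real.cosh_pos _) hp hz).2 hcosh_ge
    have e : ((2:ℝ)⁻¹ * Real.exp (q * s)) ^ (N - 1)
        = (2:ℝ)⁻¹ ^ (N - 1) * Real.exp (-lam * s) := by
      rw [aux_rpow_mul_exp (by norm_num : (0:ℝ) < 2⁻¹)]
      congr 1
      rw [hlam]; ring
    rwa [e] at step
  have hIoi : IntegrableOn g (Set.Ioi 0) := by
    have hexp : IntegrableOn (fun s : ℝ => (2:ℝ)⁻¹ ^ (N - 1) * Real.exp (-lam * s))
        (Set.Ioi 0) := (exp_neg_integrableOn_Ioi 0 hlampos).const_mul _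
    refine hexp.mono' hgcont.aestronglyMeasurable.restrict (Filter.Eventually.of_forall ?_)
    intro s
    rw [Real.norm_eq_abs, abs_of_pos (hgpos s)]
    exact hbound s
  have hIic : IntegrableOn g (Set.Iic 0) := by
    have A : MeasurableEmbedding (fun x : ℝ => -x) :=
      (Homeomorph.neg ℝ).measurableEmbedding
    have h3 := A.integrableOn_map_iff (f := g) (s := Set.Iic (0:ℝ))
      (μ := (volume : Measure ℝ))
    rw [Measure.map_neg_eq_self (volume : Measure ℝ)] at h3
    rw [h3]
    have e : (g ∘ fun x : ℝ => -x) = g := by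
      funext x
      simp only [Function.comp, hg, mul_neg, Real.cosh_neg]
    have e2 : ((fun x : ℝ => -x) ⁻¹' Set.Iic 0) = Set.Ici 0 := by
      ext x; simp
    rw [e, e2]
    exact Iff.mpr integrableOn_Ici_iff_integrableOn_Ioi hIoi
  have hg_int : Integrable g := by
    rw [← integrableOn_univ, ← Set.Iic_union_Ioi (a := (0:ℝ))]
    exact hIic.union hIoi
  set m : ℝ := ∫ s : ℝ, g s with hm
  have hmpos : 0 < m := by
    rw [hm]
    refine (integral_pos_iff_support_of_nonneg (fun s => (hgpos s).le) hg_int).2 ?_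
    have hsupp : Function.support g = Set.univ :=
      Set.eq_univ_iff_forall.2 (fun x => Function.mem_support.2 (hgpos x).ne')
    rw [hsupp]
    simp [Real.volume_univ]
  -- split
  have hsplit : (∫ s in Set.Iic c, g s) + (∫ s in Set.Ioi c, g s) = m := by
    rw [← setIntegral_union (Set.Iic_disjoint_Ioi le_rfl) measurableSet_Ioi
      hg_int.integrableOn hg_int.integrableOn, Set.Iic_union_Ioi,
      setIntegral_univ]
  have hA : (∫ s in Set.Iic c, g s) = θ * m := by
    rw [eq_div_iff hmpos.ne'] at hc
    exact hc.symm
  have hB : (∫ s in Set.Ioi c, g s) = (1 - θ) * m := by linarith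
  -- strict comparison on Ioi c
  set r : ℝ → ℝ := fun s => g c * Real.exp (-lam * (s - c)) with hr
  have hrint : IntegrableOn r (Set.Ioi c) := (aux_Ioi_exp_int hlampos c).const_mul _
  have hrval : (∫ s in Set.Ioi c, r s) = g c * (1 / lam) := by
    rw [hr]
    rw [MeasureTheory.integral_const_mul _ _, aux_Ioi_exp_val hlampos]
  have hlt : ∀ s ∈ Set.Ioi c, r s < g s := by
    intro s hs
    have hsc : 0 < q * (s - c) := mul_pos hq (by simpa using sub_pos.2 (Set.mem_Ioi.1 hs))
    have key : Real.cosh (q * s) < Real.cosh (q * c) * Real.exp (q * (s - c)) := by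
      have := aux_cosh_lt_mul_exp (q * c) hsc
      have e : q * c + q * (s - c) = q * s := by ring
      rwa [e] at this
    have hprod : 0 < Real.cosh (q * c) * Real.exp (q * (s - c)) :=
      mul_pos (Real.cosh_pos _) (Real.exp_pos _)
    have step : (Real.cosh (q * c) * Real.exp (q * (s - c))) ^ (N - 1) < g s :=
      Real.rpow_lt_rpow_of_neg (Real.cosh_pos _) key hz
    have e2 : (Real.cosh (q * c) * Real.exp (q * (s - c))) ^ (N - 1) = r s := by
      rw [aux_rpow_mul_exp (Real.cosh_pos _)]
      congr 1
      rw [hlam]; ring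
    rwa [e2] at step
  have hdiff : 0 < ∫ s in Set.Ioi c, (g s - r s) := by
    refine (setIntegral_pos_iff_support_of_nonneg_ae ?_ (hg_int.integrableOn.sub hrint)).2 ?_
    · refine (ae_restrict_iff' measurableSet_Ioi).2 (Filter.Eventually.of_forall ?_)
      exact fun s hs => sub_nonneg.2 (hlt s hs).le
    · have hsub : Set.Ioi c ⊆ Function.support (fun s => g s - r s) ∩ Set.Ioi c :=
        fun s hs => ⟨(sub_pos.2 (hlt s hs)).ne', hs⟩
      calc (0 : ENNReal) < volume (Set.Ioi c) := by simp [Real.volume_Ioi]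
        _ ≤ _ := measure_mono hsub
  have hgt : g c * (1 / lam) < ∫ s in Set.Ioi c, g s := by
    rw [integral_sub hg_int.integrableOn hrint, hrval] at hdiff
    linarith
  -- conclude
  rw [div_lt_iff₀ hmpos]
  have h5 : lam * (g c * (1 / lam)) < lam * ((1 - θ) * m) := by
    rw [← hB]; exact (mul_lt_mul_iff_right₀ hlampos).2 hgt
  have h6 : lam * (g c * (1 / lam)) = g c := by field_simp
  nlinarith [h5, h6]

/-- `K_{2,D}(θ) > I_{(K,N,∞)}(θ)` for all `K > 0`, `N < 0`,
`D ∈ (0,∞)`, `θ ∈ (0,1)`.  Here `σ = K/(1-N)`, `c = c(θ)` is characterized by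
`hc`, and `K_{2,D}(θ)` is the infimum over `ξ > 0` of the values
`sinh^{N-1}(√σ d_{2,ξ}(θ)) / ∫_ξ^{ξ+D} sinh^{N-1}(√σ s) ds`, expressed as the
`sInf` of the set of such values (with `d = d_{2,ξ}(θ)` characterized
implicitly). -/
theorem stmt11 (K N σ D θ : ℝ) (hK : 0 < K) (hN : N < 0) (hσ : σ = K / (1 - N))
    (hD : 0 < D) (hθ : θ ∈ Set.Ioo (0:ℝ) 1)
    (c : ℝ)
    (hc : θ = (∫ s in Set.Iic c, Real.cosh (Real.sqrt σ * s) ^ (N - 1)) /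
        (∫ s : ℝ, Real.cosh (Real.sqrt σ * s) ^ (N - 1))) :
    sInf { y : ℝ | ∃ ξ : ℝ, 0 < ξ ∧ ∃ d ∈ Set.Ioo ξ (ξ + D),
        θ = (∫ s in ξ..d, Real.sinh (Real.sqrt σ * s) ^ (N - 1)) /
              (∫ s in ξ..(ξ + D), Real.sinh (Real.sqrt σ * s) ^ (N - 1)) ∧
        y = Real.sinh (Real.sqrt σ * d) ^ (N - 1) /
              (∫ s in ξ..(ξ + D), Real.sinh (Real.sqrt σ * s) ^ (N - 1)) } >
      Real.cosh (Real.sqrt σ * c) ^ (N - 1) /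
        (∫ s : ℝ, Real.cosh (Real.sqrt σ * s) ^ (N - 1)) := by
  have hz : N - 1 < 0 := by linarith
  have hσpos : 0 < σ := by rw [hσ]; exact div_pos hK (by linarith)
  have hq : 0 < Real.sqrt σ := Real.sqrt_pos.2 hσpos
  set q := Real.sqrt σ with hqdef
  set lam := (1 - N) * q with hlamdef
  -- nonemptiness
  have hne : ∃ y, y ∈ { y : ℝ | ∃ ξ : ℝ, 0 < ξ ∧ ∃ d ∈ Set.Ioo ξ (ξ + D),
      θ = (∫ s in ξ..d, Real.sinh (q * s) ^ (N - 1)) /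
            (∫ s in ξ..(ξ + D), Real.sinh (q * s) ^ (N - 1)) ∧
      y = Real.sinh (q * d) ^ (N - 1) /
            (∫ s in ξ..(ξ + D), Real.sinh (q * s) ^ (N - 1)) } := by
    set M : ℝ := ∫ s in (1:ℝ)..(1 + D), Real.sinh (q * s) ^ (N - 1) with hM
    have hMpos : 0 < M := aux_M_pos hz hq one_pos (by linarith)
    have hcont : ContinuousOn (fun x => ∫ s in (1:ℝ)..x, Real.sinh (q * s) ^ (N - 1))
        (Set.Icc 1 (1 + D)) := by
      have := intervalIntegral.continuousOn_primitive_interval'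
        (aux_sinh_intgb (N := N) hq one_pos (by linarith : (0:ℝ) < 1 + D))
        (Set.left_mem_uIcc (a := (1:ℝ)) (b := 1 + D))
      rwa [Set.uIcc_of_le (by linarith : (1:ℝ) ≤ 1 + D)] at this
    have hIVT := intermediate_value_Ioo (by linarith : (1:ℝ) ≤ 1 + D) hcont
    have hmem : θ * M ∈ Set.Ioo ((fun x => ∫ s in (1:ℝ)..x, Real.sinh (q * s) ^ (N - 1)) 1)
        ((fun x => ∫ s in (1:ℝ)..x, Real.sinh (q * s) ^ (N - 1)) (1 + D)) := by
      simp only [intervalIntegral.integral_same]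
      exact ⟨mul_pos hθ.1 hMpos, by nlinarith [hθ.2, hMpos]⟩
    obtain ⟨d, hdmem, hFd⟩ := hIVT hmem
    refine ⟨Real.sinh (q * d) ^ (N - 1) / M, 1, one_pos, d, hdmem, ?_, rfl⟩
    have hFd' : (∫ s in (1:ℝ)..d, Real.sinh (q * s) ^ (N - 1)) = θ * M := hFd
    rw [hFd', ← hM]
    field_simp
  obtain ⟨y₀, hy₀⟩ := hne
  refine lt_of_lt_of_le (partA hN hq hlamdef hθ hc) (le_csInf ⟨y₀, hy₀⟩ ?_)
  rintro y ⟨ξ, hξ, d, hd, hθd, rfl⟩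
  exact partB hz hq hlamdef hD hθ.2 hξ hd hθd
end

section
/- For every K > 0, N < 0, D ∈ (0,∞) and θ ∈ (0,1), one has K_{1,D}(θ) > I_{(K,N,∞)}(θ). -/
open Set MeasureTheory intervalIntegral

namespace Stmt12

lemma cosh_le' (p q : ℝ) : Real.cosh q ≤ Real.cosh p * Real.exp |q - p| := by
  have h1 : Real.cosh q
      = Real.cosh p * Real.cosh (q - p) + Real.sinh p * Real.sinh (q - p) := by
    have := Real.cosh_add p (q - p)
    rwa [show p + (q - p) = q by ring] at this
  have habs : |Real.sinh p| ≤ Real.cosh p := by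
    rw [Real.abs_sinh, ← Real.cosh_abs p]
    nlinarith [Real.cosh_sub_sinh |p|, Real.exp_pos (-|p|)]
  have h2 : Real.sinh p * Real.sinh (q - p) ≤ Real.cosh p * |Real.sinh (q - p)| := by
    calc Real.sinh p * Real.sinh (q - p) ≤ |Real.sinh p * Real.sinh (q - p)| := le_abs_self _
      _ = |Real.sinh p| * |Real.sinh (q - p)| := abs_mul _ _
      _ ≤ Real.cosh p * |Real.sinh (q - p)| :=
          mul_le_mul_of_nonneg_right habs (abs_nonneg _)
  have h3 : Real.cosh (q - p) + |Real.sinh (q - p)| = Real.exp |q - p| := by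
    rw [Real.abs_sinh, ← Real.cosh_abs (q - p), Real.cosh_add_sinh]
  rw [← h3, mul_add]; linarith

lemma cosh_mul_cosh_le {p q r s : ℝ} (hsum : p + q = r + s) (hdiff : |p - q| ≤ |r - s|) :
    Real.cosh p * Real.cosh q ≤ Real.cosh r * Real.cosh s := by
  have e1 : Real.cosh (p + q) + Real.cosh (p - q) = 2 * (Real.cosh p * Real.cosh q) := by
    rw [Real.cosh_add, Real.cosh_sub]; ring
  have e2 : Real.cosh (r + s) + Real.cosh (r - s) = 2 * (Real.cosh r * Real.cosh s) := by
    rw [Real.cosh_add, Real.cosh_sub]; ring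
  have e3 : Real.cosh (p - q) ≤ Real.cosh (r - s) := Real.cosh_le_cosh.2 hdiff
  rw [hsum] at e1
  linarith

lemma f_le {a N : ℝ} (ha : 0 < a) (hz : N - 1 < 0) (s t : ℝ) :
    Real.cosh (a * s) ^ (N - 1)
      ≤ Real.cosh (a * t) ^ (N - 1) * Real.exp ((1 - N) * a * |s - t|) := by
  have h0 : Real.cosh (a * t) * Real.exp (-(a * |s - t|)) ≤ Real.cosh (a * s) := by
    have h := cosh_le' (a * s) (a * t)
    have habs : |a * t - a * s| = a * |s - t| := by
      rw [← mul_sub, abs_mul, abs_of_pos ha, abs_sub_comm]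
    rw [habs] at h
    rw [Real.exp_neg, ← div_eq_mul_inv, div_le_iff₀ (Real.exp_pos _)]
    exact h
  have hu : (0:ℝ) < Real.cosh (a * t) * Real.exp (-(a * |s - t|)) :=
    mul_pos (Real.cosh_pos _) (Real.exp_pos _)
  calc Real.cosh (a * s) ^ (N - 1)
      ≤ (Real.cosh (a * t) * Real.exp (-(a * |s - t|))) ^ (N - 1) :=
        (Real.rpow_le_rpow_iff_of_neg (Real.cosh_pos _) hu hz).2 h0
    _ = Real.cosh (a * t) ^ (N - 1) * Real.exp ((1 - N) * a * |s - t|) := by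
        rw [Real.mul_rpow (Real.cosh_pos _).le (Real.exp_pos _).le, ← Real.exp_mul]
        congr 1
        ring

lemma prod_right {a N : ℝ} (ha : 0 < a) (hz : N - 1 < 0) {c x h : ℝ}
    (hh : 0 ≤ h) (hcx : c ≤ x) :
    Real.cosh (a * c) ^ (N - 1) * Real.cosh (a * (x + h)) ^ (N - 1)
      ≤ Real.cosh (a * (c + h)) ^ (N - 1) * Real.cosh (a * x) ^ (N - 1) := by
  have h1 : Real.cosh (a * (c + h)) * Real.cosh (a * x)
      ≤ Real.cosh (a * c) * Real.cosh (a * (x + h)) := by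
    apply cosh_mul_cosh_le (by ring)
    rw [← mul_sub, ← mul_sub, abs_mul, abs_mul, abs_of_pos ha]
    have : |c + h - x| ≤ |c - (x + h)| := by
      rw [show c - (x + h) = -(x + h - c) by ring, abs_neg,
        abs_of_nonneg (by linarith : (0:ℝ) ≤ x + h - c), abs_le]
      constructor <;> linarith
    exact mul_le_mul_of_nonneg_left this ha.le
  calc Real.cosh (a * c) ^ (N - 1) * Real.cosh (a * (x + h)) ^ (N - 1)
      = (Real.cosh (a * c) * Real.cosh (a * (x + h))) ^ (N - 1) :=
        (Real.mul_rpow (Real.cosh_pos _).le (Real.cosh_pos _).le).symm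
    _ ≤ (Real.cosh (a * (c + h)) * Real.cosh (a * x)) ^ (N - 1) :=
        (Real.rpow_le_rpow_iff_of_neg (mul_pos (Real.cosh_pos _) (Real.cosh_pos _))
          (mul_pos (Real.cosh_pos _) (Real.cosh_pos _)) hz).2 h1
    _ = _ := Real.mul_rpow (Real.cosh_pos _).le (Real.cosh_pos _).le

lemma prod_left {a N : ℝ} (ha : 0 < a) (hz : N - 1 < 0) {c x h : ℝ}
    (hh : 0 ≤ h) (hxc : x ≤ c) :
    Real.cosh (a * c) ^ (N - 1) * Real.cosh (a * (x - h)) ^ (N - 1)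
      ≤ Real.cosh (a * (c - h)) ^ (N - 1) * Real.cosh (a * x) ^ (N - 1) := by
  have h1 : Real.cosh (a * (c - h)) * Real.cosh (a * x)
      ≤ Real.cosh (a * c) * Real.cosh (a * (x - h)) := by
    apply cosh_mul_cosh_le (by ring)
    rw [← mul_sub, ← mul_sub, abs_mul, abs_mul, abs_of_pos ha]
    have : |c - h - x| ≤ |c - (x - h)| := by
      rw [show c - (x - h) = c - x + h by ring,
        abs_of_nonneg (by linarith : (0:ℝ) ≤ c - x + h), abs_le]
      constructor <;> linarith
    exact mul_le_mul_of_nonneg_left this ha.le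
  calc Real.cosh (a * c) ^ (N - 1) * Real.cosh (a * (x - h)) ^ (N - 1)
      = (Real.cosh (a * c) * Real.cosh (a * (x - h))) ^ (N - 1) :=
        (Real.mul_rpow (Real.cosh_pos _).le (Real.cosh_pos _).le).symm
    _ ≤ (Real.cosh (a * (c - h)) * Real.cosh (a * x)) ^ (N - 1) :=
        (Real.rpow_le_rpow_iff_of_neg (mul_pos (Real.cosh_pos _) (Real.cosh_pos _))
          (mul_pos (Real.cosh_pos _) (Real.cosh_pos _)) hz).2 h1
    _ = _ := Real.mul_rpow (Real.cosh_pos _).le (Real.cosh_pos _).le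

lemma gexp {b : ℝ} (hb : b ≠ 0) (t D : ℝ) :
    ∫ s in t..(t + D), Real.exp (b * (s - t)) = (Real.exp (b * D) - 1) / b := by
  have h1 : (∫ s in t..(t + D), Real.exp (b * (s - t)))
      = ∫ u in (t - t)..(t + D - t), Real.exp (b * u) :=
    intervalIntegral.integral_comp_sub_right (fun u => Real.exp (b * u)) t
  rw [h1, show t - t = (0:ℝ) by ring, show t + D - t = D by ring,
    intervalIntegral.integral_comp_mul_left (fun u => Real.exp u) hb, integral_exp]
  simp [smul_eq_mul]
  ring

lemma gexp' {b : ℝ} (hb : b ≠ 0) (t D : ℝ) :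
    ∫ s in t..(t + D), Real.exp (b * ((t + D) - s)) = (Real.exp (b * D) - 1) / b := by
  have h1 : (∫ s in t..(t + D), Real.exp (b * ((t + D) - s)))
      = ∫ s in t..(t + D), Real.exp ((-b) * (s - t)) * Real.exp (b * D) := by
    apply intervalIntegral.integral_congr
    intro s _
    show Real.exp (b * ((t + D) - s)) = Real.exp ((-b) * (s - t)) * Real.exp (b * D)
    rw [← Real.exp_add]
    congr 1
    ring
  rw [h1, intervalIntegral.integral_mul_const, gexp (neg_ne_zero.2 hb)]
  have hE : Real.exp ((-b) * D) = (Real.exp (b * D))⁻¹ := by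
    rw [← Real.exp_neg]
    congr 1
    ring
  rw [hE]
  have : Real.exp (b * D) ≠ 0 := (Real.exp_pos _).ne'
  field_simp
  ring

lemma f_cont {a N : ℝ} : Continuous (fun s => Real.cosh (a * s) ^ (N - 1)) :=
  (Real.continuous_cosh.comp (continuous_const.mul continuous_id)).rpow_const
    (fun _ => Or.inl (Real.cosh_pos _).ne')

lemma f_integrable {a N : ℝ} (ha : 0 < a) (hN : N - 1 < 0) :
    Integrable (fun s => Real.cosh (a * s) ^ (N - 1)) := by
  have hlpos : 0 < (1 - N) * a := mul_pos (by linarith) ha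
  have hcosh_ge : ∀ x : ℝ, Real.exp |x| / 2 ≤ Real.cosh x := by
    intro x
    rw [Real.cosh_eq]
    rcases abs_cases x with ⟨h, _⟩ | ⟨h, _⟩ <;> rw [h] <;>
      nlinarith [Real.exp_pos x, Real.exp_pos (-x)]
  have hbound : ∀ s : ℝ, Real.cosh (a * s) ^ (N - 1)
      ≤ ((2:ℝ) ^ (N - 1))⁻¹ * Real.exp (-((1 - N) * a * |s|)) := by
    intro s
    have h1 : Real.exp (a * |s|) / 2 ≤ Real.cosh (a * s) := by
      have := hcosh_ge (a * s)
      rwa [abs_mul, abs_of_pos ha] at this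
    calc Real.cosh (a * s) ^ (N - 1) ≤ (Real.exp (a * |s|) / 2) ^ (N - 1) :=
        (Real.rpow_le_rpow_iff_of_neg (Real.cosh_pos _)
          (div_pos (Real.exp_pos _) two_pos) hN).2 h1
      _ = ((2:ℝ) ^ (N - 1))⁻¹ * Real.exp (-((1 - N) * a * |s|)) := by
          rw [Real.div_rpow (Real.exp_pos _).le (by norm_num : (0:ℝ) ≤ 2), ← Real.exp_mul,
            div_eq_mul_inv, mul_comm]
          congr 2
          ring
  have hexpI : Integrable (fun s : ℝ => Real.exp (-((1 - N) * a * |s|))) := by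
    have hIoi : IntegrableOn (fun s : ℝ => Real.exp (-((1 - N) * a * |s|))) (Ioi 0) := by
      apply (exp_neg_integrableOn_Ioi 0 hlpos).congr_fun ?_ measurableSet_Ioi
      intro s hs
      have : (0:ℝ) < s := hs
      simp [abs_of_pos this]
    have hIci : IntegrableOn (fun s : ℝ => Real.exp (-((1 - N) * a * |s|))) (Ici 0) :=
      (integrableOn_Ici_iff_integrableOn_Ioi (by simp)).2 hIoi
    have hIic : IntegrableOn (fun s : ℝ => Real.exp (-((1 - N) * a * |s|))) (Iic 0) := by
      have h2 := (MeasurePreserving.integrableOn_comp_preimage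
        (Measure.measurePreserving_neg (volume : Measure ℝ))
        (Homeomorph.neg ℝ).measurableEmbedding).2 hIci
      have hpre : (Neg.neg ⁻¹' Ici (0:ℝ) : Set ℝ) = Iic 0 := by ext x; simp
      have hfun : ((fun s : ℝ => Real.exp (-((1 - N) * a * |s|))) ∘ Neg.neg)
          = fun s : ℝ => Real.exp (-((1 - N) * a * |s|)) := by
        funext x; simp
      rwa [hpre, hfun] at h2
    rw [← integrableOn_univ, ← Set.Iic_union_Ioi (a := (0:ℝ))]
    exact hIic.union hIoi
  refine (hexpI.const_mul (((2:ℝ) ^ (N - 1))⁻¹)).mono' f_cont.aestronglyMeasurable (ae_of_all _ fun s => ?_)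
  rw [Real.norm_eq_abs, abs_of_pos (Real.rpow_pos_of_pos (Real.cosh_pos _) _)]
  exact hbound s

lemma w_bounds {a N D : ℝ} (ha : 0 < a) (hz : N - 1 < 0) (hD : 0 < D) (t : ℝ) :
    (∫ s in t..(t + D), Real.cosh (a * s) ^ (N - 1)
        ≤ Real.cosh (a * t) ^ (N - 1) * ((Real.exp ((1 - N) * a * D) - 1) / ((1 - N) * a)))
    ∧ (∫ s in t..(t + D), Real.cosh (a * s) ^ (N - 1)
        ≤ Real.cosh (a * (t + D)) ^ (N - 1) * ((Real.exp ((1 - N) * a * D) - 1) / ((1 - N) * a)))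
    ∧ (Real.cosh (a * t) ^ (N - 1) * ((1 - Real.exp (-((1 - N) * a * D))) / ((1 - N) * a))
        ≤ ∫ s in t..(t + D), Real.cosh (a * s) ^ (N - 1))
    ∧ (Real.cosh (a * (t + D)) ^ (N - 1) * ((1 - Real.exp (-((1 - N) * a * D))) / ((1 - N) * a))
        ≤ ∫ s in t..(t + D), Real.cosh (a * s) ^ (N - 1)) := by
  set l := (1 - N) * a with hldef
  have hlpos : 0 < l := mul_pos (by linarith) ha
  have hIf : IntervalIntegrable (fun s => Real.cosh (a * s) ^ (N - 1)) volume t (t + D) :=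
    f_cont.intervalIntegrable _ _
  have habs1 : ∀ s ∈ Icc t (t + D), |s - t| = s - t := fun s hs =>
    abs_of_nonneg (by linarith [hs.1])
  have habs2 : ∀ s ∈ Icc t (t + D), |s - (t + D)| = (t + D) - s := fun s hs => by
    rw [abs_sub_comm]; exact abs_of_nonneg (by linarith [hs.2])
  have e1 : ∫ s in t..(t + D), Real.exp (l * (s - t)) = (Real.exp (l * D) - 1) / l :=
    gexp hlpos.ne' t D
  have e2 : ∫ s in t..(t + D), Real.exp (l * ((t + D) - s)) = (Real.exp (l * D) - 1) / l :=
    gexp' hlpos.ne' t D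
  have e3 : ∫ s in t..(t + D), Real.exp ((-l) * (s - t)) = (1 - Real.exp (-(l * D))) / l := by
    rw [gexp (neg_ne_zero.2 hlpos.ne') t D, show (-l) * D = -(l * D) by ring,
      div_neg, ← neg_div, neg_sub]
  have e4 : ∫ s in t..(t + D), Real.exp ((-l) * ((t + D) - s))
      = (1 - Real.exp (-(l * D))) / l := by
    rw [gexp' (neg_ne_zero.2 hlpos.ne') t D, show (-l) * D = -(l * D) by ring,
      div_neg, ← neg_div, neg_sub]
  refine ⟨?_, ?_, ?_, ?_⟩
  · calc ∫ s in t..(t + D), Real.cosh (a * s) ^ (N - 1)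
        ≤ ∫ s in t..(t + D), Real.cosh (a * t) ^ (N - 1) * Real.exp (l * (s - t)) := by
          apply intervalIntegral.integral_mono_on (by linarith) hIf
            (Continuous.intervalIntegrable (by fun_prop) _ _)
          intro s hs
          have := f_le ha hz s t
          rwa [habs1 s hs] at this
      _ = _ := by rw [intervalIntegral.integral_const_mul, e1]
  · calc ∫ s in t..(t + D), Real.cosh (a * s) ^ (N - 1)
        ≤ ∫ s in t..(t + D), Real.cosh (a * (t + D)) ^ (N - 1) * Real.exp (l * ((t + D) - s)) := by
          apply intervalIntegral.integral_mono_on (by linarith) hIf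
            (Continuous.intervalIntegrable (by fun_prop) _ _)
          intro s hs
          have := f_le ha hz s (t + D)
          rwa [habs2 s hs] at this
      _ = _ := by rw [intervalIntegral.integral_const_mul, e2]
  · calc Real.cosh (a * t) ^ (N - 1) * ((1 - Real.exp (-(l * D))) / l)
        = ∫ s in t..(t + D), Real.cosh (a * t) ^ (N - 1) * Real.exp ((-l) * (s - t)) := by
          rw [intervalIntegral.integral_const_mul, e3]
      _ ≤ ∫ s in t..(t + D), Real.cosh (a * s) ^ (N - 1) := by
          apply intervalIntegral.integral_mono_on (by linarith)
            (Continuous.intervalIntegrable (by fun_prop) _ _) hIf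
          intro s hs
          have := f_le ha hz t s
          rw [abs_sub_comm, habs1 s hs] at this
          -- this : f t ≤ f s * exp (l * (s - t))
          rw [show (-l) * (s - t) = -(l * (s - t)) by ring, Real.exp_neg,
            mul_comm (Real.cosh (a * t) ^ (N - 1)), ← div_eq_inv_mul,
            div_le_iff₀ (Real.exp_pos _)]
          exact this
  · calc Real.cosh (a * (t + D)) ^ (N - 1) * ((1 - Real.exp (-(l * D))) / l)
        = ∫ s in t..(t + D), Real.cosh (a * (t + D)) ^ (N - 1) * Real.exp ((-l) * ((t + D) - s)) := by
          rw [intervalIntegral.integral_const_mul, e4]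
      _ ≤ ∫ s in t..(t + D), Real.cosh (a * s) ^ (N - 1) := by
          apply intervalIntegral.integral_mono_on (by linarith)
            (Continuous.intervalIntegrable (by fun_prop) _ _) hIf
          intro s hs
          have := f_le ha hz (t + D) s
          rw [abs_sub_comm, habs2 s hs] at this
          rw [show (-l) * ((t + D) - s) = -(l * ((t + D) - s)) by ring, Real.exp_neg,
            mul_comm (Real.cosh (a * (t + D)) ^ (N - 1)), ← div_eq_inv_mul,
            div_le_iff₀ (Real.exp_pos _)]
          exact this

lemma chord_right {a N : ℝ} (ha : 0 < a) (hz : N - 1 < 0) {c d : ℝ} (hcd : c ≤ d) :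
    Real.cosh (a * c) ^ (N - 1) * ∫ s in Ioi d, Real.cosh (a * s) ^ (N - 1)
      ≤ Real.cosh (a * d) ^ (N - 1) * ∫ s in Ioi c, Real.cosh (a * s) ^ (N - 1) := by
  have hIntF : Integrable (fun s => Real.cosh (a * s) ^ (N - 1)) := f_integrable ha hz
  have hh0 : 0 ≤ d - c := by linarith
  have htrans : (∫ s in Ioi d, Real.cosh (a * s) ^ (N - 1))
      = ∫ x in Ioi c, Real.cosh (a * (x + (d - c))) ^ (N - 1) := by
    have key := (measurePreserving_add_right (volume : Measure ℝ) (d - c)).setIntegral_preimage_emb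
      (measurableEmbedding_addRight (d - c)) (fun s => Real.cosh (a * s) ^ (N - 1)) (Ioi d)
    rw [← key, preimage_add_const_Ioi, show d - (d - c) = c by ring]
  rw [htrans, ← MeasureTheory.integral_const_mul, ← MeasureTheory.integral_const_mul]
  apply setIntegral_mono_on
  · exact (hIntF.comp_add_right (d - c)).integrableOn.const_mul _
  · exact hIntF.integrableOn.const_mul _
  · exact measurableSet_Ioi
  · intro x hx
    have := prod_right (c := c) (x := x) (h := d - c) ha hz hh0 (le_of_lt hx)
    rwa [show c + (d - c) = d by ring] at this

lemma chord_left {a N : ℝ} (ha : 0 < a) (hz : N - 1 < 0) {c d : ℝ} (hdc : d ≤ c) :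
    Real.cosh (a * c) ^ (N - 1) * ∫ s in Iic d, Real.cosh (a * s) ^ (N - 1)
      ≤ Real.cosh (a * d) ^ (N - 1) * ∫ s in Iic c, Real.cosh (a * s) ^ (N - 1) := by
  have hIntF : Integrable (fun s => Real.cosh (a * s) ^ (N - 1)) := f_integrable ha hz
  have hh0 : 0 ≤ c - d := by linarith
  have htrans : (∫ s in Iic d, Real.cosh (a * s) ^ (N - 1))
      = ∫ x in Iic c, Real.cosh (a * (x + (d - c))) ^ (N - 1) := by
    have key := (measurePreserving_add_right (volume : Measure ℝ) (d - c)).setIntegral_preimage_emb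
      (measurableEmbedding_addRight (d - c)) (fun s => Real.cosh (a * s) ^ (N - 1)) (Iic d)
    rw [← key, preimage_add_const_Iic, show d - (d - c) = c by ring]
  rw [htrans, ← MeasureTheory.integral_const_mul, ← MeasureTheory.integral_const_mul]
  apply setIntegral_mono_on
  · exact (hIntF.comp_add_right (d - c)).integrableOn.const_mul _
  · exact hIntF.integrableOn.const_mul _
  · exact measurableSet_Iic
  · intro x hx
    have := prod_left (c := c) (x := x) (h := c - d) ha hz hh0 hx
    rwa [show c - (c - d) = d by ring, show x - (c - d) = x + (d - c) by ring] at this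

end Stmt12

set_option maxHeartbeats 2000000 in
/-- `K_{1,D}(θ) > I_{(K,N,∞)}(θ)` for all `K > 0`, `N < 0`,
`D ∈ (0,∞)`, `θ ∈ (0,1)`.  Here `σ = K/(1-N)`, `c = c(θ)` is characterized by
`hc`, and `K_{1,D}(θ)` is the infimum over `ξ ∈ ℝ` of the values
`cosh^{N-1}(√σ d_{1,ξ}(θ)) / ∫_ξ^{ξ+D} cosh^{N-1}(√σ s) ds`, expressed as the
`sInf` of the set of such values (with `d = d_{1,ξ}(θ)` characterized
implicitly). -/
theorem stmt12 (K N σ D θ : ℝ) (hK : 0 < K) (hN : N < 0) (hσ : σ = K / (1 - N))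
    (hD : 0 < D) (hθ : θ ∈ Set.Ioo (0:ℝ) 1)
    (c : ℝ)
    (hc : θ = (∫ s in Set.Iic c, Real.cosh (Real.sqrt σ * s) ^ (N - 1)) /
        (∫ s : ℝ, Real.cosh (Real.sqrt σ * s) ^ (N - 1))) :
    sInf { y : ℝ | ∃ ξ : ℝ, ∃ d ∈ Set.Ioo ξ (ξ + D),
        θ = (∫ s in ξ..d, Real.cosh (Real.sqrt σ * s) ^ (N - 1)) /
              (∫ s in ξ..(ξ + D), Real.cosh (Real.sqrt σ * s) ^ (N - 1)) ∧
        y = Real.cosh (Real.sqrt σ * d) ^ (N - 1) /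
              (∫ s in ξ..(ξ + D), Real.cosh (Real.sqrt σ * s) ^ (N - 1)) } >
      Real.cosh (Real.sqrt σ * c) ^ (N - 1) /
        (∫ s : ℝ, Real.cosh (Real.sqrt σ * s) ^ (N - 1)) := by
  obtain ⟨hθ0, hθ1⟩ := hθ
  have hN1 : N - 1 < 0 := by linarith
  have hσpos : 0 < σ := hσ ▸ div_pos hK (by linarith)
  set a := Real.sqrt σ with ha
  have hapos : 0 < a := Real.sqrt_pos.2 hσpos
  set l := (1 - N) * a with hl
  have hlpos : 0 < l := mul_pos (by linarith) hapos
  set F : ℝ → ℝ := fun s => Real.cosh (a * s) ^ (N - 1) with hF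
  have hFx : ∀ x, Real.cosh (a * x) ^ (N - 1) = F x := fun x => rfl
  have hcont : Continuous F := Stmt12.f_cont
  have hIntF : Integrable F := Stmt12.f_integrable hapos hN1
  have hFpos : ∀ s, 0 < F s := fun s => Real.rpow_pos_of_pos (Real.cosh_pos _) _
  set M := ∫ s : ℝ, F s with hM
  have hMpos : 0 < M := by
    rw [hM, integral_pos_iff_support_of_nonneg (fun s => (hFpos s).le) hIntF]
    have hsub : Set.Ioo (0:ℝ) 1 ⊆ Function.support F := fun x _ => (hFpos x).ne'
    calc (0:ENNReal) < volume (Set.Ioo (0:ℝ) 1) := by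
          rw [Real.volume_Ioo]; norm_num
      _ ≤ volume (Function.support F) := measure_mono hsub
  set B := (Real.exp (l * D) - 1) / l with hB
  set B' := (1 - Real.exp (-(l * D))) / l with hB'
  have hexp1 : 1 < Real.exp (l * D) := by
    have := Real.exp_lt_exp.2 (show (0:ℝ) < l * D from mul_pos hlpos hD)
    rwa [Real.exp_zero] at this
  have hexp2 : Real.exp (-(l * D)) < 1 := by
    have := Real.exp_lt_exp.2 (show -(l * D) < 0 by nlinarith [mul_pos hlpos hD])
    rwa [Real.exp_zero] at this
  have hBpos : 0 < B := div_pos (by linarith) hlpos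
  have hB'pos : 0 < B' := div_pos (by linarith) hlpos
  have hβpos : 0 < B' / B := div_pos hB'pos hBpos
  -- cdf relations
  have hIicc : ∫ s in Iic c, F s = θ * M := by
    rw [hc, div_mul_cancel₀ _ hMpos.ne']
  have hIoic : ∫ s in Ioi c, F s = (1 - θ) * M := by
    have h := integral_Iic_add_Ioi (μ := volume) (b := c)
      hIntF.integrableOn hIntF.integrableOn
    rw [hIicc, ← hM] at h
    linarith
  clear_value a l F M B B'
  -- tail estimates
  have tail_right : ∀ ξ : ℝ,
      (B' / B) * (∫ s in ξ..(ξ + D), F s) ≤ ∫ s in Ioi (ξ + D), F s := by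
    intro ξ
    obtain ⟨-, h2, -, -⟩ := Stmt12.w_bounds (D := D) hapos hN1 hD ξ
    obtain ⟨-, -, h3, -⟩ := Stmt12.w_bounds (D := D) hapos hN1 hD (ξ + D)
    simp only [hFx] at h2 h3
    rw [← hl, ← hB] at h2
    rw [← hl, ← hB'] at h3
    have hsub : ∫ s in (ξ + D)..((ξ + D) + D), F s ≤ ∫ s in Ioi (ξ + D), F s := by
      rw [intervalIntegral.integral_of_le (by linarith)]
      exact setIntegral_mono_set hIntF.integrableOn
        (ae_of_all _ fun s => (hFpos s).le)
        (HasSubset.Subset.eventuallyLE Ioc_subset_Ioi_self)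
    calc (B' / B) * (∫ s in ξ..(ξ + D), F s)
        ≤ (B' / B) * (F (ξ + D) * B) :=
          mul_le_mul_of_nonneg_left h2 hβpos.le
      _ = F (ξ + D) * B' := by field_simp
      _ ≤ _ := le_trans h3 hsub
  have tail_left : ∀ ξ : ℝ,
      (B' / B) * (∫ s in ξ..(ξ + D), F s) ≤ ∫ s in Iic ξ, F s := by
    intro ξ
    obtain ⟨h2, -, -, -⟩ := Stmt12.w_bounds (D := D) hapos hN1 hD ξ
    obtain ⟨-, -, -, h3⟩ := Stmt12.w_bounds (D := D) hapos hN1 hD (ξ - D)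
    simp only [hFx] at h2 h3
    rw [← hl, ← hB] at h2
    rw [← hl, ← hB', show ξ - D + D = ξ by ring] at h3
    have hsub : ∫ s in (ξ - D)..ξ, F s ≤ ∫ s in Iic ξ, F s := by
      rw [intervalIntegral.integral_of_le (by linarith)]
      exact setIntegral_mono_set hIntF.integrableOn
        (ae_of_all _ fun s => (hFpos s).le)
        (HasSubset.Subset.eventuallyLE Ioc_subset_Iic_self)
    calc (B' / B) * (∫ s in ξ..(ξ + D), F s)
        ≤ (B' / B) * (F ξ * B) := mul_le_mul_of_nonneg_left h2 hβpos.le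
      _ = F ξ * B' := by field_simp
      _ ≤ _ := le_trans h3 hsub
  -- uniform lower bound on elements of the set
  have key : ∀ y ∈ { y : ℝ | ∃ ξ : ℝ, ∃ d ∈ Set.Ioo ξ (ξ + D),
      θ = (∫ s in ξ..d, F s) / (∫ s in ξ..(ξ + D), F s) ∧
      y = Real.cosh (a * d) ^ (N - 1) / (∫ s in ξ..(ξ + D), F s) },
      (1 + B' / B) * (F c / M) ≤ y := by
    rintro y ⟨ξ, d, hd, hθeq, hyeq⟩
    rw [hFx] at hyeq
    have hApos : 0 < ∫ s in ξ..(ξ + D), F s :=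
      intervalIntegral_pos_of_pos (hcont.intervalIntegrable _ _) hFpos (by linarith)
    set A := ∫ s in ξ..(ξ + D), F s with hA
    have hθA : ∫ s in ξ..d, F s = θ * A := by
      rw [hθeq]; field_simp
    have hsplit : (∫ s in ξ..d, F s) + (∫ s in d..(ξ + D), F s) = A :=
      intervalIntegral.integral_add_adjacent_intervals
        (hcont.intervalIntegrable _ _) (hcont.intervalIntegrable _ _)
    clear_value A
    rcases le_total c d with hcd | hdc
    · have hchord := Stmt12.chord_right (N := N) hapos hN1 hcd
      simp only [hFx] at hchord
      have htail := tail_right ξ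
      rw [← hA] at htail
      have hIoiD_eq : ∫ s in Ioi d, F s
          = (∫ s in d..(ξ + D), F s) + ∫ s in Ioi (ξ + D), F s := by
        rw [intervalIntegral.integral_of_le (le_of_lt hd.2),
          ← setIntegral_union (Ioc_disjoint_Ioi le_rfl) measurableSet_Ioi
            hIntF.integrableOn hIntF.integrableOn,
          Ioc_union_Ioi_eq_Ioi (le_of_lt hd.2)]
      have h5 : ((1 - θ) + B' / B) * A ≤ ∫ s in Ioi d, F s := by
        rw [hIoiD_eq]
        have hmid : ∫ s in d..(ξ + D), F s = A - θ * A := by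
          rw [hθA] at hsplit; linarith
        rw [hmid]
        linarith [htail]
      rw [hIoic] at hchord
      have h6 : F c * (((1 - θ) + B' / B) * A) ≤ F d * ((1 - θ) * M) :=
        le_trans (mul_le_mul_of_nonneg_left h5 (hFpos c).le) hchord
      rw [hyeq, le_div_iff₀ hApos,
        show (1 + B' / B) * (F c / M) * A = ((1 + B' / B) * F c * A) / M by ring,
        div_le_iff₀ hMpos]
      have e1 : (1 - θ) * ((1 + B' / B) * F c * A) ≤ (1 - θ) * (F d * M) := by
        calc (1 - θ) * ((1 + B' / B) * F c * A)
            = F c * (((1 - θ) + (1 - θ) * (B' / B)) * A) := by ring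
          _ ≤ F c * (((1 - θ) + B' / B) * A) := by
              apply mul_le_mul_of_nonneg_left _ (hFpos c).le
              apply mul_le_mul_of_nonneg_right _ hApos.le
              nlinarith [hβpos, hθ0, hθ1]
          _ ≤ F d * ((1 - θ) * M) := h6
          _ = (1 - θ) * (F d * M) := by ring
      exact le_of_mul_le_mul_left e1 (by linarith)
    · have hchord := Stmt12.chord_left (N := N) hapos hN1 hdc
      simp only [hFx] at hchord
      have htail := tail_left ξ
      rw [← hA] at htail
      have hIicd_eq : ∫ s in Iic d, F s
          = (∫ s in Iic ξ, F s) + ∫ s in ξ..d, F s := by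
        rw [intervalIntegral.integral_of_le (le_of_lt hd.1),
          ← setIntegral_union (Iic_disjoint_Ioc le_rfl) measurableSet_Ioc
            hIntF.integrableOn hIntF.integrableOn,
          Iic_union_Ioc_eq_Iic (le_of_lt hd.1)]
      have h5 : (θ + B' / B) * A ≤ ∫ s in Iic d, F s := by
        rw [hIicd_eq, hθA]
        linarith [htail]
      rw [hIicc] at hchord
      have h6 : F c * ((θ + B' / B) * A) ≤ F d * (θ * M) :=
        le_trans (mul_le_mul_of_nonneg_left h5 (hFpos c).le) hchord
      rw [hyeq, le_div_iff₀ hApos,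
        show (1 + B' / B) * (F c / M) * A = ((1 + B' / B) * F c * A) / M by ring,
        div_le_iff₀ hMpos]
      have e1 : θ * ((1 + B' / B) * F c * A) ≤ θ * (F d * M) := by
        calc θ * ((1 + B' / B) * F c * A)
            = F c * ((θ + θ * (B' / B)) * A) := by ring
          _ ≤ F c * ((θ + B' / B) * A) := by
              apply mul_le_mul_of_nonneg_left _ (hFpos c).le
              apply mul_le_mul_of_nonneg_right _ hApos.le
              nlinarith [hβpos, hθ0, hθ1]
          _ ≤ F d * (θ * M) := h6
          _ = θ * (F d * M) := by ring
      exact le_of_mul_le_mul_left e1 hθ0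
  -- nonemptiness
  have hne : Set.Nonempty { y : ℝ | ∃ ξ : ℝ, ∃ d ∈ Set.Ioo ξ (ξ + D),
      θ = (∫ s in ξ..d, F s) / (∫ s in ξ..(ξ + D), F s) ∧
      y = Real.cosh (a * d) ^ (N - 1) / (∫ s in ξ..(ξ + D), F s) } := by
    have hgcont : Continuous fun x => ∫ s in (0:ℝ)..x, F s :=
      intervalIntegral.continuous_primitive (fun u v => hcont.intervalIntegrable u v) 0
    have hA0 : 0 < ∫ s in (0:ℝ)..D, F s :=
      intervalIntegral_pos_of_pos (hcont.intervalIntegrable _ _) hFpos hD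
    have hmem : θ * ∫ s in (0:ℝ)..D, F s ∈
        Set.Ioo ((fun x => ∫ s in (0:ℝ)..x, F s) 0) ((fun x => ∫ s in (0:ℝ)..x, F s) D) := by
      constructor
      · simp only [intervalIntegral.integral_same]
        exact mul_pos hθ0 hA0
      · simp only
        nlinarith [hA0]
    obtain ⟨d, hd, hgd⟩ := intermediate_value_Ioo hD.le hgcont.continuousOn hmem
    simp only at hgd
    refine ⟨Real.cosh (a * d) ^ (N - 1) / (∫ s in (0:ℝ)..((0:ℝ) + D), F s),
      0, d, ?_, ?_, rfl⟩
    · rwa [zero_add]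
    · rw [show (0:ℝ) + D = D by ring, hgd]
      field_simp
  -- conclude
  rw [hFx c]
  refine lt_of_lt_of_le ?_ (le_csInf hne key)
  have hTpos : 0 < F c / M := div_pos (hFpos c) hMpos
  nlinarith [mul_pos hβpos hTpos]
end

section
/- Let K > 0, N < 0, σ := K/(1−N) and D ∈ (0,∞). Then the function m₀(ξ) := (∫_ξ^{ξ+D} cosh^{N−1}(√σ·s) ds)/cosh^{N−1}(√σ·ξ) is monotone decreasing on ℝ, and the function m₁(ξ) := (∫_ξ^{ξ+D} cosh^{N−1}(√σ·s) ds)/cosh^{N−1}(√σ·(ξ+D)) is monotone increasing on ℝ. -/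
open Set MeasureTheory intervalIntegral

private lemma cosh_cross (x y u : ℝ) (hxy : x ≤ y) (hu : 0 ≤ u) :
    Real.cosh (x + u) * Real.cosh y ≤ Real.cosh (y + u) * Real.cosh x := by
  have h : Real.cosh (y + u) * Real.cosh x - Real.cosh (x + u) * Real.cosh y
      = Real.sinh u * Real.sinh (y - x) := by
    rw [Real.cosh_add, Real.cosh_add, Real.sinh_sub]; ring
  nlinarith [mul_nonneg (Real.sinh_nonneg_iff.2 hu)
    (Real.sinh_nonneg_iff.2 (sub_nonneg.2 hxy))]

private lemma cont_rpow (c e a : ℝ) :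
    Continuous fun t : ℝ => Real.cosh (c * (a + t)) ^ e := by
  apply Continuous.rpow_const
  · exact Real.continuous_cosh.comp (by continuity)
  · intro x; exact Or.inl (ne_of_gt (Real.cosh_pos _))

private lemma m_shift (c e D ξ : ℝ) :
    (∫ s in ξ..(ξ + D), Real.cosh (c * s) ^ e)
      = ∫ t in (0:ℝ)..D, Real.cosh (c * (ξ + t)) ^ e := by
  have := intervalIntegral.integral_comp_add_left
    (a := (0:ℝ)) (b := D) (fun s => Real.cosh (c * s) ^ e) ξ
  simpa using this.symm

/-- for `K > 0`, `N < 0`, `σ = K/(1-N)`, `D ∈ (0,∞)`, the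
function `m₀(ξ) = (∫_ξ^{ξ+D} cosh^{N-1}(√σ s) ds)/cosh^{N-1}(√σ ξ)` is
monotone decreasing on ℝ and
`m₁(ξ) = (∫_ξ^{ξ+D} cosh^{N-1}(√σ s) ds)/cosh^{N-1}(√σ (ξ+D))` is monotone
increasing on ℝ. -/
theorem stmt17 (K N σ D : ℝ) (hK : 0 < K) (hN : N < 0) (hσ : σ = K / (1 - N))
    (hD : 0 < D) :
    Antitone (fun ξ : ℝ =>
        (∫ s in ξ..(ξ + D), Real.cosh (Real.sqrt σ * s) ^ (N - 1)) /
          Real.cosh (Real.sqrt σ * ξ) ^ (N - 1)) ∧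
    Monotone (fun ξ : ℝ =>
        (∫ s in ξ..(ξ + D), Real.cosh (Real.sqrt σ * s) ^ (N - 1)) /
          Real.cosh (Real.sqrt σ * (ξ + D)) ^ (N - 1)) := by
  set c := Real.sqrt σ with hc
  have hc0 : 0 ≤ c := Real.sqrt_nonneg σ
  set e := N - 1 with he
  have he0 : e ≤ 0 := by linarith
  -- ratio integrand positivity & rpow facts
  have hcoshpos : ∀ x : ℝ, (0:ℝ) < Real.cosh x := fun x => Real.cosh_pos x
  -- rewrite m₀
  have hm0 : ∀ ξ : ℝ, (∫ s in ξ..(ξ + D), Real.cosh (c * s) ^ e) / Real.cosh (c * ξ) ^ e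
      = ∫ t in (0:ℝ)..D, (Real.cosh (c * (ξ + t)) / Real.cosh (c * ξ)) ^ e := by
    intro ξ
    rw [m_shift]
    rw [show (fun t => (Real.cosh (c * (ξ + t)) / Real.cosh (c * ξ)) ^ e)
        = fun t => Real.cosh (c * (ξ + t)) ^ e / Real.cosh (c * ξ) ^ e from
      funext fun t => Real.div_rpow (le_of_lt (hcoshpos _)) (le_of_lt (hcoshpos _)) _]
    rw [intervalIntegral.integral_div]
  have hm1 : ∀ ξ : ℝ, (∫ s in ξ..(ξ + D), Real.cosh (c * s) ^ e) /
        Real.cosh (c * (ξ + D)) ^ e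
      = ∫ t in (0:ℝ)..D, (Real.cosh (c * (ξ + t)) / Real.cosh (c * (ξ + D))) ^ e := by
    intro ξ
    rw [m_shift]
    rw [show (fun t => (Real.cosh (c * (ξ + t)) / Real.cosh (c * (ξ + D))) ^ e)
        = fun t => Real.cosh (c * (ξ + t)) ^ e / Real.cosh (c * (ξ + D)) ^ e from
      funext fun t => Real.div_rpow (le_of_lt (hcoshpos _)) (le_of_lt (hcoshpos _)) _]
    rw [intervalIntegral.integral_div]
  -- integrability of ratio integrands
  have hInt : ∀ (ξ b : ℝ), IntervalIntegrable
      (fun t => (Real.cosh (c * (ξ + t)) / Real.cosh (c * b)) ^ e)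
      MeasureTheory.volume 0 D := by
    intro ξ b
    apply Continuous.intervalIntegrable
    have : Continuous fun t : ℝ => Real.cosh (c * (ξ + t)) / Real.cosh (c * b) :=
      (Real.continuous_cosh.comp (by continuity)).div_const _
    exact this.rpow_const fun x => Or.inl (ne_of_gt (div_pos (hcoshpos _) (hcoshpos _)))
  constructor
  · intro ξ₁ ξ₂ hξ
    simp only
    rw [hm0, hm0]
    apply intervalIntegral.integral_mono_on (le_of_lt hD) (hInt ξ₂ ξ₂) (hInt ξ₁ ξ₁)
    intro t ht
    have ht0 : 0 ≤ t := ht.1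
    have hratio : Real.cosh (c * (ξ₁ + t)) / Real.cosh (c * ξ₁)
        ≤ Real.cosh (c * (ξ₂ + t)) / Real.cosh (c * ξ₂) := by
      rw [div_le_div_iff₀ (hcoshpos _) (hcoshpos _)]
      have := cosh_cross (c * ξ₁) (c * ξ₂) (c * t)
        (by nlinarith) (mul_nonneg hc0 ht0)
      calc Real.cosh (c * (ξ₁ + t)) * Real.cosh (c * ξ₂)
          = Real.cosh (c * ξ₁ + c * t) * Real.cosh (c * ξ₂) := by ring_nf
        _ ≤ Real.cosh (c * ξ₂ + c * t) * Real.cosh (c * ξ₁) := this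
        _ = Real.cosh (c * (ξ₂ + t)) * Real.cosh (c * ξ₁) := by ring_nf
    exact Real.rpow_le_rpow_of_nonpos (div_pos (hcoshpos _) (hcoshpos _)) hratio he0
  · intro ξ₁ ξ₂ hξ
    simp only
    rw [hm1, hm1]
    apply intervalIntegral.integral_mono_on (le_of_lt hD) (hInt ξ₁ (ξ₁ + D)) (hInt ξ₂ (ξ₂ + D))
    intro t ht
    have htD : t ≤ D := ht.2
    have hratio : Real.cosh (c * (ξ₂ + t)) / Real.cosh (c * (ξ₂ + D))
        ≤ Real.cosh (c * (ξ₁ + t)) / Real.cosh (c * (ξ₁ + D)) := by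
      rw [div_le_div_iff₀ (hcoshpos _) (hcoshpos _)]
      have := cosh_cross (c * (ξ₁ + t)) (c * (ξ₂ + t)) (c * (D - t))
        (by nlinarith) (mul_nonneg hc0 (by linarith))
      calc Real.cosh (c * (ξ₂ + t)) * Real.cosh (c * (ξ₁ + D))
          = Real.cosh (c * (ξ₁ + t) + c * (D - t)) * Real.cosh (c * (ξ₂ + t)) := by ring_nf
        _ ≤ Real.cosh (c * (ξ₂ + t) + c * (D - t)) * Real.cosh (c * (ξ₁ + t)) := this
        _ = Real.cosh (c * (ξ₁ + t)) * Real.cosh (c * (ξ₂ + D)) := by ring_nf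
    exact Real.rpow_le_rpow_of_nonpos (div_pos (hcoshpos _) (hcoshpos _)) hratio he0
end

section
/- Let K > 0, N < 0, σ := K/(1−N), D ∈ (0,∞), ξ > 0 and θ ∈ (0,1). If d ∈ (ξ, ξ+D) satisfies ∫_ξ^{d} sinh^{N−1}(√σ·s) ds = θ·∫_ξ^{ξ+D} sinh^{N−1}(√σ·s) ds, then d ≤ (θ·(ξ+D)^N + (1−θ)·ξ^N)^{1/N}. -/
open Set MeasureTheory intervalIntegral

lemma sinh_le_mul_cosh' {x : ℝ} (hx : 0 ≤ x) : Real.sinh x ≤ x * Real.cosh x := by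
  have hder : ∀ y : ℝ, HasDerivAt (fun t => t * Real.cosh t - Real.sinh t) (y * Real.sinh y) y := by
    intro y
    have h := ((hasDerivAt_id y).mul (Real.hasDerivAt_cosh y)).sub (Real.hasDerivAt_sinh y)
    exact h.congr_deriv (by simp)
  have mono : MonotoneOn (fun t => t * Real.cosh t - Real.sinh t) (Set.Ici 0) := by
    apply monotoneOn_of_deriv_nonneg (convex_Ici 0)
    · exact (Continuous.sub (continuous_id.mul Real.continuous_cosh) Real.continuous_sinh).continuousOn
    · intro y hy
      exact (hder y).differentiableAt.differentiableWithinAt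
    · intro y hy
      rw [interior_Ici, Set.mem_Ioi] at hy
      rw [(hder y).deriv]
      exact mul_nonneg hy.le (Real.sinh_pos_iff.mpr hy).le
  have := mono (Set.self_mem_Ici) hx hx
  simpa using this

lemma sinh_div_mono' {x y : ℝ} (hx : 0 < x) (hxy : x ≤ y) :
    Real.sinh x / x ≤ Real.sinh y / y := by
  have hder : ∀ t : ℝ, t ≠ 0 → HasDerivAt (fun u => Real.sinh u / u)
      ((Real.cosh t * t - Real.sinh t * 1) / t ^ 2) t := by
    intro t ht
    exact (Real.hasDerivAt_sinh t).div (hasDerivAt_id t) ht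
  have mono : MonotoneOn (fun u => Real.sinh u / u) (Set.Ioi 0) := by
    apply monotoneOn_of_deriv_nonneg (convex_Ioi 0)
    · exact ContinuousOn.div Real.continuous_sinh.continuousOn continuousOn_id
        (fun t ht => ne_of_gt ht)
    · intro t ht
      rw [interior_Ioi] at ht
      exact (hder t (ne_of_gt ht)).differentiableAt.differentiableWithinAt
    · intro t ht
      rw [interior_Ioi] at ht
      rw [(hder t (ne_of_gt ht)).deriv]
      apply div_nonneg _ (sq_nonneg t)
      have := sinh_le_mul_cosh' ht.le
      nlinarith
  exact mono hx (lt_of_lt_of_le hx hxy) hxy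

/-- for `K > 0`, `N < 0`, `σ = K/(1-N)`, `D ∈ (0,∞)`, `ξ > 0`
and `θ ∈ (0,1)`, if `d ∈ (ξ, ξ+D)` satisfies
`∫_ξ^d sinh^{N-1}(√σ s) ds = θ ∫_ξ^{ξ+D} sinh^{N-1}(√σ s) ds`, then
`d ≤ (θ (ξ+D)^N + (1-θ) ξ^N)^{1/N}`. -/
theorem stmt18 (K N σ D ξ θ : ℝ) (hK : 0 < K) (hN : N < 0) (hσ : σ = K / (1 - N))
    (hD : 0 < D) (hξ : 0 < ξ) (hθ : θ ∈ Set.Ioo (0:ℝ) 1)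
    (d : ℝ) (hd : d ∈ Set.Ioo ξ (ξ + D))
    (heq : (∫ s in ξ..d, Real.sinh (Real.sqrt σ * s) ^ (N - 1)) =
      θ * ∫ s in ξ..(ξ + D), Real.sinh (Real.sqrt σ * s) ^ (N - 1)) :
    d ≤ (θ * (ξ + D) ^ N + (1 - θ) * ξ ^ N) ^ (1 / N) := by
  obtain ⟨hθ0, hθ1⟩ := hθ
  obtain ⟨hdl, hdr⟩ := hd
  have hσpos : 0 < σ := by rw [hσ]; exact div_pos hK (by linarith)
  set r := Real.sqrt σ with hrdef
  have hr : 0 < r := Real.sqrt_pos.mpr hσpos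
  have hdpos : 0 < d := lt_trans hξ hdl
  have hξD : 0 < ξ + D := by linarith
  have hNne : N ≠ 0 := ne_of_lt hN
  -- sinh positivity on the relevant region
  have hsinh_pos : ∀ s : ℝ, 0 < s → 0 < Real.sinh (r * s) := fun s hs =>
    Real.sinh_pos_iff.mpr (mul_pos hr hs)
  -- monotonicity of s ↦ sinh(r s)/s
  have hmono : ∀ s t : ℝ, 0 < s → s ≤ t →
      Real.sinh (r * s) / s ≤ Real.sinh (r * t) / t := by
    intro s t hs hst
    have ht : 0 < t := lt_of_lt_of_le hs hst
    have h1 := sinh_div_mono' (mul_pos hr hs)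
      (mul_le_mul_of_nonneg_left hst hr.le)
    have e1 : Real.sinh (r * s) / s = r * (Real.sinh (r * s) / (r * s)) := by
      field_simp
    have e2 : Real.sinh (r * t) / t = r * (Real.sinh (r * t) / (r * t)) := by
      field_simp
    rw [e1, e2]
    exact mul_le_mul_of_nonneg_left h1 hr.le
  -- factorization f s = (sinh(r s)/s)^(N-1) * s^(N-1)
  have hfact : ∀ s : ℝ, 0 < s →
      Real.sinh (r * s) ^ (N - 1) = (Real.sinh (r * s) / s) ^ (N - 1) * s ^ (N - 1) := by
    intro s hs
    rw [Real.div_rpow (hsinh_pos s hs).le hs.le,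
      div_mul_cancel₀ _ (ne_of_gt (Real.rpow_pos_of_pos hs _))]
  set c : ℝ := (Real.sinh (r * d) / d) ^ (N - 1) with hcdef
  have hc : 0 < c := Real.rpow_pos_of_pos (div_pos (hsinh_pos d hdpos) hdpos) _
  -- pointwise bounds
  have hlow : ∀ s ∈ Set.Icc ξ d, c * s ^ (N - 1) ≤ Real.sinh (r * s) ^ (N - 1) := by
    intro s ⟨hs1, hs2⟩
    have hs : 0 < s := lt_of_lt_of_le hξ hs1
    rw [hfact s hs]
    apply mul_le_mul_of_nonneg_right _ (Real.rpow_pos_of_pos hs _).le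
    exact Real.rpow_le_rpow_of_nonpos (div_pos (hsinh_pos s hs) hs)
      (hmono s d hs hs2) (by linarith)
  have hup : ∀ s ∈ Set.Icc d (ξ + D), Real.sinh (r * s) ^ (N - 1) ≤ c * s ^ (N - 1) := by
    intro s ⟨hs1, hs2⟩
    have hs : 0 < s := lt_of_lt_of_le hdpos hs1
    rw [hfact s hs]
    apply mul_le_mul_of_nonneg_right _ (Real.rpow_pos_of_pos hs _).le
    exact Real.rpow_le_rpow_of_nonpos (div_pos (hsinh_pos d hdpos) hdpos)
      (hmono d s hdpos hs1) (by linarith)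
  -- integrability
  have intf : ∀ p q : ℝ, ξ ≤ p → ξ ≤ q →
      IntervalIntegrable (fun s => Real.sinh (r * s) ^ (N - 1)) volume p q := by
    intro p q hp hq
    apply ContinuousOn.intervalIntegrable
    apply ContinuousOn.rpow_const
    · exact (Real.continuous_sinh.comp (continuous_const.mul continuous_id)).continuousOn
    · intro s hs
      left
      have : ξ ≤ s := le_trans (le_min hp hq) hs.1
      exact ne_of_gt (hsinh_pos s (lt_of_lt_of_le hξ this))
  have intg : ∀ p q : ℝ, ξ ≤ p → ξ ≤ q →
      IntervalIntegrable (fun s : ℝ => s ^ (N - 1)) volume p q := by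
    intro p q hp hq
    apply ContinuousOn.intervalIntegrable
    apply ContinuousOn.rpow_const continuousOn_id
    intro s hs
    left
    have : ξ ≤ s := le_trans (le_min hp hq) hs.1
    exact ne_of_gt (lt_of_lt_of_le hξ this)
  set A : ℝ := ∫ s in ξ..d, Real.sinh (r * s) ^ (N - 1) with hAdef
  set B : ℝ := ∫ s in d..(ξ + D), Real.sinh (r * s) ^ (N - 1) with hBdef
  set a : ℝ := ∫ s in ξ..d, (s : ℝ) ^ (N - 1) with hadef
  set b : ℝ := ∫ s in d..(ξ + D), (s : ℝ) ^ (N - 1) with hbdef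
  have hsplit : A + B = ∫ s in ξ..(ξ + D), Real.sinh (r * s) ^ (N - 1) :=
    integral_add_adjacent_intervals (intf ξ d le_rfl hdl.le) (intf d (ξ + D) hdl.le (by linarith))
  have heqAB : A = θ * (A + B) := by rw [hsplit]; exact heq
  -- positivity of integrals
  have ha_pos : 0 < a := by
    apply intervalIntegral.intervalIntegral_pos_of_pos_on (intg ξ d le_rfl hdl.le)
      (fun s hs => Real.rpow_pos_of_pos (lt_trans hξ hs.1) _) hdl
  have hb_pos : 0 < b := by
    apply intervalIntegral.intervalIntegral_pos_of_pos_on (intg d (ξ + D) hdl.le (by linarith))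
      (fun s hs => Real.rpow_pos_of_pos (lt_trans hdpos hs.1) _) hdr
  have hA_pos : 0 < A := by
    apply intervalIntegral.intervalIntegral_pos_of_pos_on (intf ξ d le_rfl hdl.le)
      (fun s hs => Real.rpow_pos_of_pos (hsinh_pos s (lt_trans hξ hs.1)) _) hdl
  have hB_pos : 0 < B := by
    apply intervalIntegral.intervalIntegral_pos_of_pos_on (intf d (ξ + D) hdl.le (by linarith))
      (fun s hs => Real.rpow_pos_of_pos (hsinh_pos s (lt_trans hdpos hs.1)) _) hdr
  -- comparison of integrals
  have hAa : c * a ≤ A := by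
    have h := intervalIntegral.integral_mono_on hdl.le
      ((intg ξ d le_rfl hdl.le).const_mul c) (intf ξ d le_rfl hdl.le) hlow
    rwa [intervalIntegral.integral_const_mul] at h
  have hBb : B ≤ c * b := by
    have h := intervalIntegral.integral_mono_on hdr.le
      (intf d (ξ + D) hdl.le (by linarith)) ((intg d (ξ + D) hdl.le (by linarith)).const_mul c) hup
    rwa [intervalIntegral.integral_const_mul] at h
  have hba : B * a ≤ A * b := by
    calc B * a ≤ (c * b) * a := mul_le_mul_of_nonneg_right hBb ha_pos.le
      _ = (c * a) * b := by ring
      _ ≤ A * b := mul_le_mul_of_nonneg_right hAa hb_pos.le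
  have hABpos : 0 < A + B := by linarith
  have hkey : a ≤ θ * (a + b) := by nlinarith [hba, hABpos, heqAB]
  -- compute a and b
  have hnm : (0:ℝ) ∉ Set.uIcc ξ d := by
    simp only [Set.mem_uIcc]; push_neg
    constructor <;> intro h <;> linarith
  have hnm2 : (0:ℝ) ∉ Set.uIcc d (ξ + D) := by
    simp only [Set.mem_uIcc]; push_neg
    constructor <;> intro h <;> linarith
  have hne1 : N - 1 ≠ -1 := by intro h; apply hNne; linarith
  have ea : a = (d ^ N - ξ ^ N) / N := by
    rw [hadef, integral_rpow (Or.inr ⟨hne1, hnm⟩)]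
    norm_num
  have eb : b = ((ξ + D) ^ N - d ^ N) / N := by
    rw [hbdef, integral_rpow (Or.inr ⟨hne1, hnm2⟩)]
    norm_num
  rw [ea, eb] at hkey
  set M : ℝ := θ * (ξ + D) ^ N + (1 - θ) * ξ ^ N with hMdef
  have hMd : M ≤ d ^ N := by
    have h2 := mul_le_mul_of_nonpos_left hkey hN.le
    rw [mul_div_cancel₀ _ hNne] at h2
    have h4 : N * (θ * ((d ^ N - ξ ^ N) / N + ((ξ + D) ^ N - d ^ N) / N)) =
        θ * ((ξ + D) ^ N - ξ ^ N) := by field_simp; ring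
    rw [h4] at h2
    have : θ * ((ξ + D) ^ N - ξ ^ N) ≤ d ^ N - ξ ^ N := h2
    rw [hMdef]; linarith
  have hMpos : 0 < M := by
    rw [hMdef]
    have := Real.rpow_pos_of_pos hξD N
    have := Real.rpow_pos_of_pos hξ N
    nlinarith
  calc d = (d ^ N) ^ (1 / N) := by
        rw [one_div, Real.rpow_rpow_inv hdpos.le hNne]
    _ ≤ M ^ (1 / N) := Real.rpow_le_rpow_of_nonpos hMpos hMd
        (by rw [one_div]; exact inv_nonpos.mpr hN.le)
end
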